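/- arXiv:math/0608227 — 7 statements merged into one kernel-verified Lean document; each statement's English description precedes it below -/
import Mathlib

section
/- Let A be a unital C*-algebra over ℂ and let α be a *-automorphism of A. Then there exists a state φ of A that is α-invariant, i.e. φ ∘ α = φ. -/
open scoped ComplexOrder
open Filter Topology

section AuxInvariantState
set_option linter.unusedSectionVars false
variable {A : Type*} [NormedRing A] [StarRing A] [CStarRing A]
    [NormedAlgebra ℂ A] [CompleteSpace A] [StarModule ℂ A] [Nontrivial A]

/-- A norm-nonincreasing functional with φ 1 = 1 maps selfadjoints to reals. -/
lemma aux_im_eq_zero (φ : A →L[ℂ] ℂ) (hn : ∀ a : A, ‖φ a‖ ≤ ‖a‖) (h1 : φ 1 = 1)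
    {b : A} (hb : IsSelfAdjoint b) : (φ b).im = 0 := by
  set v : ℝ := (φ b).im with hv
  have key : ∀ t : ℝ, (v + t)^2 ≤ ‖b‖^2 + t^2 := by
    intro t
    set c : A := b + ((t : ℂ) * Complex.I) • (1 : A) with hc
    have hφc : φ c = φ b + (t : ℂ) * Complex.I := by
      simp [hc, h1]
    have hstar : star c * c = b * b + ((t : ℝ)^2 : ℂ) • (1 : A) := by
      have hsb : star b = b := hb
      simp only [hc, star_add, star_smul, star_one, hsb]
      rw [add_mul, mul_add, mul_add]
      simp only [smul_mul_assoc, mul_smul_comm, mul_one, one_mul]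
      have this : star ((t : ℂ) * Complex.I) = -((t : ℂ) * Complex.I) := by
        rw [star_mul']
        simp [Complex.ext_iff]
      rw [this, smul_smul]
      have h2 : (t : ℂ) * Complex.I * -((t : ℂ) * Complex.I) = (((t:ℝ)^2 : ℝ) : ℂ) := by
        push_cast
        ring_nf
        rw [Complex.I_sq]
        ring
      rw [h2]
      module
    have hnormc : ‖c‖^2 ≤ ‖b‖^2 + t^2 := by
      have h1' : ‖c‖^2 = ‖star c * c‖ := (CStarRing.norm_star_mul_self (x := c)).symm ▸ (sq ‖c‖)
      rw [h1', hstar]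
      calc ‖b * b + ((t:ℝ)^2 : ℂ) • (1:A)‖ ≤ ‖b * b‖ + ‖((t:ℝ)^2 : ℂ) • (1:A)‖ := norm_add_le _ _
        _ ≤ ‖b‖^2 + t^2 := by
            rw [norm_smul, CStarRing.norm_one]
            gcongr
            · exact (sq ‖b‖) ▸ norm_mul_le b b
            · simp
    have him : (φ c).im = v + t := by simp [hφc, hv]
    have habs : ‖φ c‖^2 ≤ ‖b‖^2 + t^2 := by
      calc ‖φ c‖^2 ≤ ‖c‖^2 := by gcongr; exact hn c
        _ ≤ _ := hnormc
    calc (v + t)^2 ≤ (φ c).re^2 + (φ c).im^2 := by rw [him]; nlinarith [sq_nonneg (φ c).re]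
      _ = ‖φ c‖^2 := by
          rw [Complex.sq_norm, Complex.normSq_apply]; ring
      _ ≤ _ := habs
  by_contra hv0
  have key' : ∀ t : ℝ, v^2 + 2*v*t ≤ ‖b‖^2 := fun t => by nlinarith [key t]
  have := key' (‖b‖^2 / v)
  have hv2 : 2*v*(‖b‖^2/v) = 2*‖b‖^2 := by field_simp
  rw [hv2] at this
  nlinarith [sq_nonneg v, sq_nonneg ‖b‖, pow_two_pos_of_ne_zero hv0]

set_option linter.unusedSectionVars false

/-- A norm-nonincreasing functional with φ 1 = 1 is positive. -/
lemma aux_positive (φ : A →L[ℂ] ℂ) (hn : ∀ a : A, ‖φ a‖ ≤ ‖a‖) (h1 : φ 1 = 1)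
    (a : A) : 0 ≤ φ (star a * a) := by
  letI : CStarAlgebra A := {}
  letI := CStarAlgebra.spectralOrder A
  haveI := CStarAlgebra.spectralOrderedRing A
  set x : A := star a * a with hx
  have hxsa : IsSelfAdjoint x := IsSelfAdjoint.star_mul_self a
  have hxnn : (0:A) ≤ x := star_mul_self_nonneg a
  have him : (φ x).im = 0 := aux_im_eq_zero φ hn h1 hxsa
  set y : A := algebraMap ℝ A ‖x‖ - x with hy
  have hy0 : (0:A) ≤ y := sub_nonneg.mpr hxsa.le_algebraMap_norm_self
  have hyle : y ≤ algebraMap ℝ A ‖x‖ := by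
    simpa [hy] using sub_le_self (algebraMap ℝ A ‖x‖) hxnn
  have hyn : ‖y‖ ≤ ‖x‖ := (CStarAlgebra.norm_le_iff_le_algebraMap y (norm_nonneg x) hy0).mpr hyle
  have hφy : φ y = (‖x‖ : ℂ) - φ x := by
    have : φ (algebraMap ℝ A ‖x‖) = (‖x‖ : ℂ) := by
      rw [Algebra.algebraMap_eq_smul_one, ContinuousLinearMap.map_smul_of_tower, h1]
      simp [Complex.real_smul]
    simp [hy, map_sub, this]
  have hb : ‖(‖x‖ : ℂ) - φ x‖ ≤ ‖x‖ := hφy ▸ ((hn y).trans hyn)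
  -- conclude 0 ≤ (φ x).re
  have hre : 0 ≤ (φ x).re := by
    have := Complex.abs_re_le_norm ((‖x‖ : ℂ) - φ x)
    have h2 : ((‖x‖ : ℂ) - φ x).re = ‖x‖ - (φ x).re := by simp
    rw [h2] at this
    have := this.trans hb
    cases abs_le.mp this with
    | intro h h' => linarith
  rw [Complex.le_def]
  constructor <;> simp [him, hre]

/-- existence of a state -/
lemma aux_exists_state : ∃ ψ : A →L[ℂ] ℂ, (∀ a : A, ‖ψ a‖ ≤ ‖a‖) ∧ ψ 1 = 1 := by
  obtain ⟨g, hg1, hgx⟩ := exists_dual_vector ℂ (1 : A) (by rw [CStarRing.norm_one]; exact one_ne_zero)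
  refine ⟨g, fun a => ?_, ?_⟩
  · calc ‖g a‖ ≤ ‖g‖ * ‖a‖ := g.le_opNorm a
      _ = ‖a‖ := by rw [hg1, one_mul]
  · rw [hgx, CStarRing.norm_one]; norm_num


end AuxInvariantState

set_option maxHeartbeats 1000000 in
/-- Every *-automorphism of a unital C*-algebra admits an invariant state. -/
theorem exists_invariant_state {A : Type*} [NormedRing A] [StarRing A] [CStarRing A]
    [NormedAlgebra ℂ A] [CompleteSpace A] [StarModule ℂ A] [Nontrivial A]
    (α : A ≃⋆ₐ[ℂ] A) :
    ∃ φ : A →L[ℂ] ℂ, (φ 1 = 1 ∧ ∀ a : A, 0 ≤ φ (star a * a)) ∧ ∀ a : A, φ (α a) = φ a := by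
  classical
  have hα : ∀ a, ‖α a‖ = ‖a‖ := by
    letI : CStarAlgebra A := {}
    exact fun a => NonUnitalStarAlgHom.norm_map α α.injective a
  set αL : A →L[ℂ] A := LinearMap.mkContinuous
    { toFun := ⇑α, map_add' := map_add α, map_smul' := map_smul α } 1
    (fun a => by simp [hα]) with hαL
  have hαLa : ∀ a, αL a = α a := fun a => rfl
  have hsucc : ∀ (k : ℕ) (a : A), (αL ^ (k+1)) a = (αL ^ k) (α a) := by
    intro k a
    rw [pow_succ, ContinuousLinearMap.mul_apply, hαLa]
  have hp1 : ∀ k : ℕ, (αL ^ k) (1 : A) = 1 := by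
    intro k; induction k with
    | zero => simp
    | succ k ih => rw [hsucc, map_one, ih]
  have hps : ∀ (k : ℕ) (a : A), (αL ^ k) (star a * a) = star ((αL ^ k) a) * ((αL ^ k) a) := by
    intro k; induction k with
    | zero => intro a; simp
    | succ k ih =>
        intro a
        rw [hsucc, map_mul, map_star, ih (α a), hsucc k a]
  have hpn : ∀ (k : ℕ) (a : A), ‖(αL ^ k) a‖ = ‖a‖ := by
    intro k; induction k with
    | zero => intro a; simp
    | succ k ih => intro a; rw [hsucc, ih (α a), hα]
  -- a state
  obtain ⟨ψ, hψn, hψ1⟩ := aux_exists_state (A := A)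
  have hψpos := aux_positive ψ hψn hψ1
  -- Cesàro averages
  set r : ℕ → ℝ := fun n => (((n+1 : ℕ) : ℝ))⁻¹ with hr
  set c : ℕ → ℂ := fun n => ((r n : ℝ) : ℂ) with hc
  have hrpos : ∀ n, 0 < r n := fun n => by positivity
  set Φ : ℕ → StrongDual ℂ A :=
    fun n => c n • ∑ k ∈ Finset.range (n+1), ψ.comp (αL ^ k) with hΦ
  have happ : ∀ n (a : A), Φ n a = c n * ∑ k ∈ Finset.range (n+1), ψ ((αL ^ k) a) := by
    intro n a
    simp [hΦ, ContinuousLinearMap.sum_apply, ContinuousLinearMap.smul_apply]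
  set seq : ℕ → WeakDual ℂ A := fun n => StrongDual.toWeakDual (Φ n) with hseq
  have htw : ∀ (χ : StrongDual ℂ A) (a : A), StrongDual.toWeakDual χ a = χ a :=
    fun _ _ => rfl
  set S : Set (WeakDual ℂ A) :=
    {φ | (∀ a : A, ‖φ a‖ ≤ ‖a‖) ∧ φ 1 = 1 ∧ ∀ a : A, 0 ≤ φ (star a * a)} with hS
  -- S is closed
  have hSclosed : IsClosed S := by
    have hrep : S = (⋂ a : A, {φ : WeakDual ℂ A | ‖φ a‖ ≤ ‖a‖}) ∩
        ({φ : WeakDual ℂ A | φ 1 = 1} ∩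
          ⋂ a : A, {φ : WeakDual ℂ A | 0 ≤ φ (star a * a)}) := by
      ext φ; simp [hS, Set.mem_iInter, forall_and]
    rw [hrep]
    refine IsClosed.inter ?_ (IsClosed.inter ?_ ?_)
    · exact isClosed_iInter fun a =>
        isClosed_le (continuous_norm.comp (WeakDual.eval_continuous a)) continuous_const
    · exact isClosed_eq (WeakDual.eval_continuous (1 : A)) continuous_const
    · refine isClosed_iInter fun a => ?_
      have : {φ : WeakDual ℂ A | 0 ≤ φ (star a * a)} =
          {φ : WeakDual ℂ A | (0:ℝ) ≤ (φ (star a * a)).re} ∩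
          {φ : WeakDual ℂ A | (0:ℝ) = (φ (star a * a)).im} := by
        ext φ; simp [Complex.le_def, eq_comm]
      rw [this]
      exact (isClosed_le continuous_const
          (Complex.continuous_re.comp (WeakDual.eval_continuous _))).inter
        (isClosed_eq continuous_const
          (Complex.continuous_im.comp (WeakDual.eval_continuous _)))
  -- S is bounded, hence compact
  have hScompact : IsCompact S := by
    refine WeakDual.isCompact_of_bounded_of_closed ?_ hSclosed
    refine Bornology.IsBounded.subset (Metric.isBounded_closedBall
      (x := (0 : StrongDual ℂ A)) (r := 1)) ?_
    intro φ hφ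
    show dist (WeakDual.toStrongDual φ) 0 ≤ 1
    rw [dist_zero_right]
    exact ContinuousLinearMap.opNorm_le_bound _ zero_le_one fun a => by
      simpa using hφ.1 a
  -- each average is in S
  have hmem : ∀ n, seq n ∈ S := by
    intro n
    have hrc : ‖c n‖ = r n := by
      rw [hc]; simpa using abs_of_pos (hrpos n)
    refine ⟨?_, ?_, ?_⟩
    · intro a
      rw [htw, happ]
      calc ‖c n * ∑ k ∈ Finset.range (n+1), ψ ((αL ^ k) a)‖
          = r n * ‖∑ k ∈ Finset.range (n+1), ψ ((αL ^ k) a)‖ := by rw [norm_mul, hrc]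
        _ ≤ r n * ((n+1 : ℕ) * ‖a‖) := by
            refine mul_le_mul_of_nonneg_left ?_ (hrpos n).le
            calc ‖∑ k ∈ Finset.range (n+1), ψ ((αL ^ k) a)‖
                ≤ ∑ k ∈ Finset.range (n+1), ‖ψ ((αL ^ k) a)‖ := norm_sum_le _ _
              _ ≤ ∑ k ∈ Finset.range (n+1), ‖a‖ := by
                  refine Finset.sum_le_sum fun k _ => ?_
                  rw [← hpn k a]; exact hψn _
              _ = (n+1 : ℕ) * ‖a‖ := by
                  rw [Finset.sum_const, Finset.card_range, nsmul_eq_mul]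
        _ = ‖a‖ := by
            rw [hr]
            field_simp
    · rw [htw, happ]
      simp only [hp1, hψ1]
      rw [Finset.sum_const, Finset.card_range, nsmul_eq_mul, mul_one, hc, hr]
      push_cast
      have : ((n:ℂ) + 1) ≠ 0 := by
        exact_mod_cast Nat.cast_add_one_ne_zero (R := ℂ) n
      field_simp
    · intro a
      rw [htw, happ]
      refine mul_nonneg ?_ ?_
      · show (0:ℂ) ≤ ((r n : ℝ) : ℂ)
        exact Complex.zero_le_real.mpr (hrpos n).le
      · refine Finset.sum_nonneg fun k _ => ?_
        rw [hps]
        exact hψpos _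
  -- cluster point
  set F : Filter (WeakDual ℂ A) := Filter.map seq atTop with hF
  haveI : F.NeBot := Filter.map_neBot
  have hFS : F ≤ Filter.principal S := by
    rw [hF, Filter.le_principal_iff, Filter.mem_map]
    exact Filter.Eventually.of_forall hmem
  obtain ⟨φ, hφS, hφcl⟩ := hScompact.exists_clusterPt hFS
  refine ⟨WeakDual.toStrongDual φ, ⟨hφS.2.1, hφS.2.2⟩, fun a => ?_⟩
  -- invariance
  set g : WeakDual ℂ A → ℂ := fun χ => χ (α a) - χ a with hg
  have hgc : Continuous g :=
    (WeakDual.eval_continuous (α a)).sub (WeakDual.eval_continuous a)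
  have hdiff : ∀ n, g (seq n) = c n * (ψ ((αL ^ (n+1)) a) - ψ a) := by
    intro n
    rw [hg]
    simp only
    rw [htw, htw, happ, happ, ← mul_sub]
    congr 1
    rw [← Finset.sum_sub_distrib]
    have htel := Finset.sum_range_sub (fun k => ψ ((αL ^ k) a)) (n+1)
    calc ∑ k ∈ Finset.range (n+1), (ψ ((αL ^ k) (α a)) - ψ ((αL ^ k) a))
        = ∑ k ∈ Finset.range (n+1), (ψ ((αL ^ (k+1)) a) - ψ ((αL ^ k) a)) :=
          Finset.sum_congr rfl fun k _ => by rw [hsucc]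
      _ = ψ ((αL ^ (n+1)) a) - ψ ((αL ^ 0) a) := htel
      _ = ψ ((αL ^ (n+1)) a) - ψ a := by rw [pow_zero]; simp
  have htend : Tendsto (fun n => g (seq n)) atTop (𝓝 0) := by
    have hb : ∀ n, ‖g (seq n)‖ ≤ (2 * ‖a‖) * (1 / ((n:ℝ) + 1)) := by
      intro n
      rw [hdiff, norm_mul]
      have hrc : ‖c n‖ = r n := by
        rw [hc]; simpa using abs_of_pos (hrpos n)
      rw [hrc]
      have h1 : ‖ψ ((αL ^ (n+1)) a) - ψ a‖ ≤ 2 * ‖a‖ := by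
        calc ‖ψ ((αL ^ (n+1)) a) - ψ a‖ ≤ ‖ψ ((αL ^ (n+1)) a)‖ + ‖ψ a‖ := norm_sub_le _ _
          _ ≤ ‖a‖ + ‖a‖ := by
              gcongr
              · rw [← hpn (n+1) a]; exact hψn _
              · exact hψn a
          _ = 2 * ‖a‖ := by ring
      calc r n * ‖ψ ((αL ^ (n+1)) a) - ψ a‖ ≤ r n * (2 * ‖a‖) :=
            mul_le_mul_of_nonneg_left h1 (hrpos n).le
        _ = (2 * ‖a‖) * (1 / ((n:ℝ) + 1)) := by
            rw [hr]; push_cast; ring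
    refine squeeze_zero_norm hb ?_
    simpa using tendsto_one_div_add_atTop_nhds_zero_nat.const_mul (2 * ‖a‖)
  have h1 : ClusterPt (g φ) (Filter.map g F) := hφcl.map hgc.continuousAt Filter.tendsto_map
  have h2 : Filter.map g F ≤ 𝓝 0 := by
    rw [hF, Filter.map_map]
    exact htend
  have h3 : g φ = 0 := eq_of_nhds_neBot (h1.mono h2)
  have := sub_eq_zero.mp h3
  exact this
end

section
/- Let A be a unital C*-algebra over ℂ and α a *-automorphism of A with fixed-point subalgebra A^α. If every state of A^α has a unique extension to a state φ of A satisfying φ ∘ α = φ, then the linear subspace A^α + {a − α(a) : a ∈ A} is dense in A in the norm topology. -/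
open scoped ComplexOrder
open Filter Topology

/-- The fixed-point subalgebra `A^α` of a *-automorphism `α` of a unital C*-algebra `A`. -/
def fixedPointSubalgebra {A : Type*} [NormedRing A] [StarRing A] [NormedAlgebra ℂ A]
    [StarModule ℂ A] (α : A ≃⋆ₐ[ℂ] A) : StarSubalgebra ℂ A where
  carrier := {a : A | α a = a}
  mul_mem' {a b} ha hb := by
    simp only [Set.mem_setOf_eq] at *
    rw [map_mul, ha, hb]
  add_mem' {a b} ha hb := by
    simp only [Set.mem_setOf_eq] at *
    rw [map_add, ha, hb]
  algebraMap_mem' r := by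
    simp only [Set.mem_setOf_eq, Algebra.algebraMap_eq_smul_one, map_smul, map_one]
  star_mem' {a} ha := by
    simp only [Set.mem_setOf_eq] at *
    rw [map_star, ha]


section Aux
variable {A : Type*} [NormedRing A] [StarRing A] [CStarRing A] [NormedAlgebra ℂ A]
  [CompleteSpace A] [StarModule ℂ A] [PartialOrder A] [StarOrderedRing A]

private lemma rsmul_nonneg' {r : ℝ} (hr : 0 ≤ r) {v : A} (hv : 0 ≤ v) : 0 ≤ r • v := by
  rw [StarOrderedRing.nonneg_iff] at hv
  induction hv using AddSubmonoid.closure_induction with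
  | mem x hx =>
      obtain ⟨s, rfl⟩ := hx
      have : r • (star s * s) = star ((Real.sqrt r : ℂ) • s) * ((Real.sqrt r : ℂ) • s) := by
        rw [star_smul, smul_mul_smul_comm, ← Complex.coe_smul]
        congr 1
        rw [Complex.star_def, Complex.conj_ofReal, ← Complex.ofReal_mul,
          Real.mul_self_sqrt hr]
      rw [this]
      exact star_mul_self_nonneg _
  | zero => simp
  | add x y _ _ hx hy => rw [smul_add]; exact add_nonneg hx hy

private lemma alpha_nonneg (α : A ≃⋆ₐ[ℂ] A) {v : A} (hv : 0 ≤ v) : 0 ≤ α v := by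
  rw [StarOrderedRing.nonneg_iff] at hv ⊢
  induction hv using AddSubmonoid.closure_induction with
  | mem x hx =>
      obtain ⟨s, rfl⟩ := hx
      rw [map_mul, map_star]
      exact AddSubmonoid.subset_closure ⟨α s, rfl⟩
  | zero => simpa using zero_mem (AddSubmonoid.closure (Set.range fun s : A => star s * s))
  | add x y _ _ hx hy => rw [map_add]; exact add_mem hx hy

private lemma rsmul_le_rsmul' {r : ℝ} (hr : 0 ≤ r) {a b : A} (hab : a ≤ b) :
    r • a ≤ r • b := by
  rw [← sub_nonneg, ← smul_sub]
  exact rsmul_nonneg' hr (sub_nonneg.2 hab)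

private lemma sa_le_norm_smul_one {a : A} (ha : IsSelfAdjoint a) : a ≤ ‖a‖ • (1 : A) := by
  letI : CStarAlgebra A := ⟨⟩
  simpa [Algebra.algebraMap_eq_smul_one] using ha.le_algebraMap_norm_self

private lemma one_nonneg' : (0 : A) ≤ 1 := by
  simpa using star_mul_self_nonneg (1 : A)

private lemma smul_one_le_smul_one {r s : ℝ} (hrs : r ≤ s) : r • (1 : A) ≤ s • (1 : A) := by
  rw [← sub_nonneg, ← sub_smul]
  exact rsmul_nonneg' (by linarith) one_nonneg'

private lemma norm_le_of_le_smul_one [Nontrivial A] {v : A} {r : ℝ} (hr : 0 ≤ r)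
    (hv : 0 ≤ v) (h : v ≤ r • (1 : A)) : ‖v‖ ≤ r := by
  letI : CStarAlgebra A := ⟨⟩
  have := CStarAlgebra.norm_le_norm_of_nonneg_of_le hv h
  simpa [norm_smul, abs_of_nonneg hr] using this

end Aux

section Aux2
open Polynomial
variable {A : Type*} [NormedRing A] [StarRing A] [CStarRing A] [NormedAlgebra ℂ A]
  [CompleteSpace A] [StarModule ℂ A] [PartialOrder A] [StarOrderedRing A]

variable (α : A ≃⋆ₐ[ℂ] A)

/-- `α` as a real-linear endomorphism. -/
private noncomputable def uEnd : Module.End ℝ A :=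
  { toFun := α,
    map_add' := fun x y => map_add α x y,
    map_smul' := fun r x => by
      simp only [RingHom.id_apply, ← Complex.coe_smul, map_smul] }

private lemma uEnd_apply (x : A) : uEnd α x = α x := rfl

private lemma upow_apply (n : ℕ) (x : A) : (uEnd α ^ (n+1)) x = (uEnd α ^ n) (α x) := by
  rw [pow_succ, Module.End.mul_apply, uEnd_apply]

private lemma upow_nonneg (n : ℕ) {x : A} (hx : 0 ≤ x) : 0 ≤ (uEnd α ^ n) x := by
  induction n generalizing x with
  | zero => simpa using hx
  | succ n ih => rw [upow_apply]; exact ih (alpha_nonneg α hx)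

private lemma upow_one' (n : ℕ) : (uEnd α ^ n) (1 : A) = 1 := by
  induction n with
  | zero => simp
  | succ n ih => rw [upow_apply, map_one]; exact ih

private lemma upow_norm (n : ℕ) (x : A) : ‖(uEnd α ^ n) x‖ = ‖x‖ := by
  letI : CStarAlgebra A := ⟨⟩
  induction n generalizing x with
  | zero => simp
  | succ n ih =>
      rw [upow_apply, ih]
      exact NonUnitalStarAlgHom.norm_map α α.injective x

private lemma upow_inv_g (g : A →L[ℂ] ℂ) (hinv : ∀ a, g (α a) = g a) (n : ℕ) (x : A) :
    g ((uEnd α ^ n) x) = g x := by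
  induction n generalizing x with
  | zero => simp
  | succ n ih => rw [upow_apply, ih, hinv]

private lemma T_apply (P : Polynomial ℝ) (x : A) :
    (aeval (uEnd α) P) x
      = ∑ i ∈ Finset.range (P.natDegree + 1), P.coeff i • ((uEnd α ^ i) x) := by
  rw [Polynomial.aeval_eq_sum_range]
  rw [LinearMap.sum_apply]
  simp [LinearMap.smul_apply]

private lemma eval_one_eq (P : Polynomial ℝ) :
    P.eval 1 = ∑ i ∈ Finset.range (P.natDegree + 1), P.coeff i := by
  rw [Polynomial.eval_eq_sum_range]; simp

private lemma T_nonneg (P : Polynomial ℝ) (hP : ∀ k, 0 ≤ P.coeff k) {x : A} (hx : 0 ≤ x) :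
    0 ≤ (aeval (uEnd α) P) x := by
  rw [T_apply]
  exact Finset.sum_nonneg fun i _ => rsmul_nonneg' (hP i) (upow_nonneg α i hx)

private lemma T_mono (P : Polynomial ℝ) (hP : ∀ k, 0 ≤ P.coeff k) {a b : A} (hab : a ≤ b) :
    (aeval (uEnd α) P) a ≤ (aeval (uEnd α) P) b := by
  rw [← sub_nonneg, ← map_sub]
  exact T_nonneg α P hP (sub_nonneg.2 hab)

private lemma T_one (P : Polynomial ℝ) (hP1 : P.eval 1 = 1) :
    (aeval (uEnd α) P) (1 : A) = 1 := by
  rw [T_apply]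
  simp only [upow_one' α]
  rw [← Finset.sum_smul, ← eval_one_eq, hP1, one_smul]

private lemma T_smul_one (P : Polynomial ℝ) (hP1 : P.eval 1 = 1) (t : ℝ) :
    (aeval (uEnd α) P) (t • (1 : A)) = t • 1 := by
  rw [map_smul, T_one α P hP1]

private lemma T_g (g : A →L[ℂ] ℂ) (hinv : ∀ a, g (α a) = g a)
    (P : Polynomial ℝ) (hP1 : P.eval 1 = 1) (x : A) :
    g ((aeval (uEnd α) P) x) = g x := by
  rw [T_apply, map_sum]
  have : ∀ i, g (P.coeff i • ((uEnd α ^ i) x)) = P.coeff i • g x := by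
    intro i
    rw [g.map_smul_of_tower, upow_inv_g α g hinv]
  rw [Finset.sum_congr rfl fun i _ => this i, ← Finset.sum_smul, ← eval_one_eq, hP1, one_smul]

private lemma T_comp (P Q : Polynomial ℝ) (x : A) :
    (aeval (uEnd α) (P * Q)) x = (aeval (uEnd α) Q) ((aeval (uEnd α) P) x) := by
  rw [mul_comm, map_mul, Module.End.mul_apply]

/-- the averaging polynomial -/
private noncomputable def Pn (n : ℕ) : Polynomial ℝ := (n : ℝ)⁻¹ • ∑ i ∈ Finset.range n, X ^ i

private lemma Pn_coeff (n k : ℕ) : 0 ≤ (Pn n).coeff k := by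
  rw [Pn, Polynomial.coeff_smul, Polynomial.finset_sum_coeff]
  simp only [Polynomial.coeff_X_pow]
  positivity

private lemma Pn_eval (n : ℕ) (hn : 1 ≤ n) : (Pn n).eval 1 = 1 := by
  rw [Pn, Polynomial.eval_smul, Polynomial.eval_finset_sum]
  simp only [Polynomial.eval_pow, Polynomial.eval_X, one_pow, smul_eq_mul,
    Finset.sum_const, Finset.card_range, nsmul_eq_mul, mul_one]
  field_simp

private lemma Pn_telescope (n : ℕ) : Pn n * (1 - X) = (n : ℝ)⁻¹ • (1 - X ^ n) := by
  rw [Pn, smul_mul_assoc]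
  congr 1
  have := geom_sum_mul (X : Polynomial ℝ) n
  rw [← neg_sub (X : Polynomial ℝ) 1, mul_neg, this, neg_sub]

private lemma T_Pn_telescope (n : ℕ) (x : A) :
    (aeval (uEnd α) (Pn n)) (x - α x) = (n : ℝ)⁻¹ • (x - (uEnd α ^ n) x) := by
  have h1 : x - α x = (aeval (uEnd α) ((1 : Polynomial ℝ) - X)) x := by
    rw [map_sub, map_one, Polynomial.aeval_X, LinearMap.sub_apply, Module.End.one_apply,
      uEnd_apply]
  rw [h1, ← T_comp, mul_comm, Pn_telescope, map_smul, map_sub, map_one, map_pow,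
    Polynomial.aeval_X, LinearMap.smul_apply, LinearMap.sub_apply, Module.End.one_apply]
private lemma upow_star (α : A ≃⋆ₐ[ℂ] A) (n : ℕ) (x : A) :
    (uEnd α ^ n) (star x) = star ((uEnd α ^ n) x) := by
  induction n generalizing x with
  | zero => simp
  | succ n ih => rw [upow_apply, upow_apply, map_star α, ih]

private lemma key_functional [Nontrivial A] (α : A ≃⋆ₐ[ℂ] A) (g : A →L[ℂ] ℂ)
    (hinv : ∀ a, g (α a) = g a) :
    ∃ h₀ : A →ₗ[ℝ] ℝ, (∀ x, |h₀ x| ≤ 2 * ‖g‖ * ‖x‖) ∧ (∀ x : A, star x = -x → h₀ x = 0) ∧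
      (∀ v : A, 0 ≤ v → |(g v).re| ≤ h₀ v) ∧ (∀ x, h₀ (α x) = h₀ x) := by
  set G := ‖g‖ with hGdef
  have hG0 : (0:ℝ) ≤ G := norm_nonneg g
  set gr : A → ℝ := fun y => (g y).re with hgr
  have gr_bound : ∀ y, |gr y| ≤ G * ‖y‖ := fun y =>
    (Complex.abs_re_le_norm (g y)).trans (g.le_opNorm y)
  have gr_zero : gr 0 = 0 := by simp [hgr]
  have gr_smul : ∀ (c : ℝ) (y : A), gr (c • y) = c * gr y := by
    intro c y
    rw [hgr]
    simp only [g.map_smul_of_tower, Complex.smul_re, smul_eq_mul]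
  -- the real part map
  set rp : A → A := fun x => (2:ℝ)⁻¹ • (x + star x) with hrp
  have rp_sa : ∀ x, IsSelfAdjoint (rp x) := by
    intro x
    rw [IsSelfAdjoint, hrp]
    simp only [star_smul, star_trivial, star_add, star_star]
    rw [add_comm]
  have rp_norm : ∀ x, ‖rp x‖ ≤ ‖x‖ := by
    intro x
    rw [hrp]
    calc ‖(2:ℝ)⁻¹ • (x + star x)‖ = 2⁻¹ * ‖x + star x‖ := by
          rw [norm_smul]; norm_num
      _ ≤ 2⁻¹ * (‖x‖ + ‖star x‖) := by
          have := norm_add_le x (star x); linarith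
      _ = ‖x‖ := by rw [norm_star]; ring
  have rp_add : ∀ x y, rp (x + y) = rp x + rp y := by
    intro x y
    simp only [hrp, star_add, smul_add]
    abel
  have rp_rsmul : ∀ (c : ℝ) (x : A), rp (c • x) = c • rp x := by
    intro c x
    simp only [hrp, star_smul, star_trivial, smul_add, smul_comm c]
  have rp_sa_eq : ∀ x : A, IsSelfAdjoint x → rp x = x := by
    intro x hx
    rw [hrp]
    simp only [hx.star_eq]
    rw [← two_smul ℝ x, smul_smul]
    norm_num
  have rp_neg : ∀ x : A, rp (-x) = - rp x := by
    intro x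
    simp only [hrp, star_neg]
    rw [← neg_add, smul_neg]
  have rp_anti : ∀ x : A, star x = -x → rp x = 0 := by
    intro x hx
    rw [hrp]
    simp [hx]
  have rp_alpha : ∀ x, rp (α x) = α (rp x) := by
    intro x
    simp only [hrp, ← map_star]
    rw [← Complex.coe_smul, ← Complex.coe_smul, ← map_add, ← map_smul]
  -- selfadjoint bounds
  have sa_bounds : ∀ x : A, IsSelfAdjoint x → -‖x‖ • (1:A) ≤ x ∧ x ≤ ‖x‖ • (1:A) := by
    intro x hx
    refine ⟨?_, sa_le_norm_smul_one hx⟩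
    have h2 := sa_le_norm_smul_one hx.neg
    rw [norm_neg] at h2
    rw [neg_smul, neg_le]
    exact h2
  -- the witness set
  set W : A → Set ℝ := fun x => {r | ∃ P : Polynomial ℝ, (∀ k, 0 ≤ P.coeff k) ∧ P.eval 1 = 1 ∧
    ∃ v v' : A, 0 ≤ v ∧ 0 ≤ v' ∧ ∃ t : ℝ, 0 ≤ t ∧
      (aeval (uEnd α) P) (rp x) + v + v' ≤ t • 1 ∧ r = -(gr v) + gr v' + 2*G*t} with hW
  have one_coeff : ∀ k, (0:ℝ) ≤ (1 : Polynomial ℝ).coeff k := by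
    intro k
    rw [Polynomial.coeff_one]
    positivity
  have W_basic : ∀ x : A, (2*G*‖x‖) ∈ W x := by
    intro x
    refine ⟨1, one_coeff, by simp, 0, 0, le_refl 0, le_refl 0, ‖x‖, norm_nonneg x, ?_, by
      simp [gr_zero]⟩
    simp only [map_one, Module.End.one_apply, add_zero]
    calc rp x ≤ ‖rp x‖ • (1:A) := sa_le_norm_smul_one (rp_sa x)
      _ ≤ ‖x‖ • 1 := smul_one_le_smul_one (rp_norm x)
  have W_lb : ∀ x : A, ∀ r ∈ W x, -(2*G*‖x‖) ≤ r := by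
    rintro x r ⟨P, hP, hP1, v, v', hv, hv', t, ht, hineq, rfl⟩
    have h1 : -‖x‖ • (1:A) ≤ (aeval (uEnd α) P) (rp x) := by
      have := (sa_bounds (rp x) (rp_sa x)).1
      have h2 : -‖rp x‖ • (1:A) ≤ rp x := this
      have h3 := T_mono α P hP h2
      rw [map_smul, T_one α P hP1] at h3
      refine le_trans ?_ h3
      rw [neg_smul, neg_smul, neg_le_neg_iff]
      exact smul_one_le_smul_one (rp_norm x)
    have hvv' : v + v' ≤ (t + ‖x‖) • (1:A) := by
      have h4 : (aeval (uEnd α) P) (rp x) + (v + v') ≤ t • 1 := by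
        rw [← add_assoc]; exact hineq
      calc v + v' ≤ t • (1:A) - (aeval (uEnd α) P) (rp x) := by
            rwa [le_sub_iff_add_le, add_comm]
        _ ≤ t • 1 + ‖x‖ • 1 := by
            have : - (aeval (uEnd α) P) (rp x) ≤ ‖x‖ • 1 := by
              rw [neg_le, ← neg_smul]
              exact h1
            have := add_le_add_left this (t • (1:A))
            rw [sub_eq_add_neg, add_comm, add_comm (t • 1)]
            exact this
        _ = (t + ‖x‖) • 1 := by rw [add_smul]
    have hnv : ‖v‖ ≤ t + ‖x‖ := by
      refine norm_le_of_le_smul_one (by positivity) hv ?_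
      exact le_trans (le_add_of_nonneg_right hv') hvv'
    have hnv' : ‖v'‖ ≤ t + ‖x‖ := by
      refine norm_le_of_le_smul_one (by positivity) hv' ?_
      exact le_trans (le_add_of_nonneg_left hv) hvv'
    have b1 : |gr v| ≤ G * (t + ‖x‖) :=
      (gr_bound v).trans (by nlinarith)
    have b2 : |gr v'| ≤ G * (t + ‖x‖) :=
      (gr_bound v').trans (by nlinarith)
    have := abs_le.1 b1
    have := abs_le.1 b2
    nlinarith
  have W_ne : ∀ x : A, (W x).Nonempty := fun x => ⟨_, W_basic x⟩
  have W_bdd : ∀ x : A, BddBelow (W x) := fun x => ⟨-(2*G*‖x‖), fun r hr => W_lb x r hr⟩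
  set N : A → ℝ := fun x => sInf (W x) with hN
  have N_le : ∀ (x : A) (r : ℝ), r ∈ W x → N x ≤ r := fun x r hr => csInf_le (W_bdd x) hr
  have N_ub : ∀ x : A, N x ≤ 2*G*‖x‖ := fun x => N_le x _ (W_basic x)
  have N_lb : ∀ x : A, -(2*G*‖x‖) ≤ N x := fun x => le_csInf (W_ne x) (W_lb x)
  -- homogeneity
  have W_scale : ∀ (c : ℝ), 0 < c → ∀ (x : A) (r : ℝ), r ∈ W x → c * r ∈ W (c • x) := by
    rintro c hc x r ⟨P, hP, hP1, v, v', hv, hv', t, ht, hineq, rfl⟩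
    refine ⟨P, hP, hP1, c • v, c • v', rsmul_nonneg' hc.le hv, rsmul_nonneg' hc.le hv',
      c * t, by positivity, ?_, ?_⟩
    · rw [rp_rsmul, map_smul, ← smul_add, ← smul_add]
      rw [mul_smul]
      exact rsmul_le_rsmul' hc.le hineq
    · rw [gr_smul, gr_smul]
      ring
  have N_scale : ∀ (c : ℝ), 0 < c → ∀ x : A, N (c • x) ≤ c * N x := by
    intro c hc x
    have step : ∀ r ∈ W x, N (c • x) ≤ c * r := fun r hr => N_le _ _ (W_scale c hc x r hr)
    have : N (c • x) / c ≤ N x := by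
      refine le_csInf (W_ne x) fun r hr => ?_
      rw [div_le_iff₀ hc, mul_comm]
      exact step r hr
    calc N (c • x) = (N (c • x) / c) * c := by field_simp
      _ ≤ N x * c := by nlinarith [this]
      _ = c * N x := mul_comm _ _
  have N_hom : ∀ (c : ℝ), 0 < c → ∀ x : A, N (c • x) = c * N x := by
    intro c hc x
    refine le_antisymm (N_scale c hc x) ?_
    have h2 := N_scale c⁻¹ (by positivity) (c • x)
    rw [smul_smul, inv_mul_cancel₀ hc.ne', one_smul] at h2
    calc c * N x ≤ c * (c⁻¹ * N (c • x)) := by nlinarith [h2]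
      _ = N (c • x) := by field_simp
  -- subadditivity
  have N_add : ∀ x y : A, N (x + y) ≤ N x + N y := by
    intro x y
    refine le_of_forall_pos_le_add fun ε hε => ?_
    obtain ⟨r₁, hr₁, hr₁'⟩ := Real.lt_sInf_add_pos (W_ne x) (half_pos hε)
    obtain ⟨r₂, hr₂, hr₂'⟩ := Real.lt_sInf_add_pos (W_ne y) (half_pos hε)
    obtain ⟨P₁, hP₁, hP₁1, v₁, v₁', hv₁, hv₁', t₁, ht₁, hineq₁, hval₁⟩ := hr₁
    obtain ⟨P₂, hP₂, hP₂1, v₂, v₂', hv₂, hv₂', t₂, ht₂, hineq₂, hval₂⟩ := hr₂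
    have key : r₁ + r₂ ∈ W (x + y) := by
      refine ⟨P₁ * P₂, ?_, by rw [Polynomial.eval_mul, hP₁1, hP₂1, mul_one],
        (aeval (uEnd α) P₂) v₁ + (aeval (uEnd α) P₁) v₂,
        (aeval (uEnd α) P₂) v₁' + (aeval (uEnd α) P₁) v₂',
        add_nonneg (T_nonneg α P₂ hP₂ hv₁) (T_nonneg α P₁ hP₁ hv₂),
        add_nonneg (T_nonneg α P₂ hP₂ hv₁') (T_nonneg α P₁ hP₁ hv₂'),
        t₁ + t₂, by linarith, ?_, ?_⟩
      · intro k
        rw [Polynomial.coeff_mul]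
        exact Finset.sum_nonneg fun p _ => mul_nonneg (hP₁ _) (hP₂ _)
      · have e1 : (aeval (uEnd α) (P₁ * P₂)) (rp (x + y))
            = (aeval (uEnd α) P₂) ((aeval (uEnd α) P₁) (rp x))
              + (aeval (uEnd α) P₁) ((aeval (uEnd α) P₂) (rp y)) := by
          rw [rp_add, map_add, T_comp]
          congr 1
          rw [mul_comm, T_comp]
        rw [e1]
        have i1 := T_mono α P₂ hP₂ hineq₁
        have i2 := T_mono α P₁ hP₁ hineq₂
        rw [map_add, map_add, T_smul_one α P₂ hP₂1] at i1
        rw [map_add, map_add, T_smul_one α P₁ hP₁1] at i2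
        calc (aeval (uEnd α) P₂) ((aeval (uEnd α) P₁) (rp x))
              + (aeval (uEnd α) P₁) ((aeval (uEnd α) P₂) (rp y))
              + ((aeval (uEnd α) P₂) v₁ + (aeval (uEnd α) P₁) v₂)
              + ((aeval (uEnd α) P₂) v₁' + (aeval (uEnd α) P₁) v₂')
            = ((aeval (uEnd α) P₂) ((aeval (uEnd α) P₁) (rp x)) + (aeval (uEnd α) P₂) v₁
                + (aeval (uEnd α) P₂) v₁')
              + ((aeval (uEnd α) P₁) ((aeval (uEnd α) P₂) (rp y)) + (aeval (uEnd α) P₁) v₂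
                + (aeval (uEnd α) P₁) v₂') := by abel
          _ ≤ t₁ • 1 + t₂ • 1 := add_le_add i1 i2
          _ = (t₁ + t₂) • 1 := by rw [add_smul]
      · have gT : ∀ (P : Polynomial ℝ), P.eval 1 = 1 → ∀ w : A, gr ((aeval (uEnd α) P) w) = gr w := by
          intro P hP1 w
          simp only [hgr]
          rw [T_g α g hinv P hP1]
        have gr_add : ∀ a b : A, gr (a + b) = gr a + gr b := by
          intro a b
          rw [hgr]
          simp [map_add]
        rw [gr_add, gr_add, gT P₂ hP₂1 v₁, gT P₁ hP₁1 v₂, gT P₂ hP₂1 v₁', gT P₁ hP₁1 v₂',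
          hval₁, hval₂]
        ring
    have := N_le _ _ key
    linarith
  -- Hahn-Banach
  have N_zero : N 0 = 0 := by
    have h1 := N_ub 0
    have h2 := N_lb 0
    simp only [norm_zero, mul_zero, neg_zero] at h1 h2
    linarith
  obtain ⟨h₀, -, hle⟩ := exists_extension_of_le_sublinear ⟨⊥, 0⟩ N N_hom N_add (by
    rintro ⟨x, hx⟩
    rw [Submodule.mem_bot] at hx
    subst hx
    simp [N_zero])
  -- properties of h₀
  have h0_ub : ∀ x, h₀ x ≤ 2*G*‖x‖ := fun x => (hle x).trans (N_ub x)
  have h0_bound : ∀ x, |h₀ x| ≤ 2*G*‖x‖ := by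
    intro x
    rw [abs_le]
    refine ⟨?_, h0_ub x⟩
    have := h0_ub (-x)
    rw [map_neg, norm_neg] at this
    linarith
  have N_anti : ∀ x : A, rp x = 0 → N x ≤ 0 := by
    intro x hx
    refine N_le x 0 ⟨1, one_coeff, by simp, 0, 0, le_refl 0, le_refl 0, 0, le_refl 0, ?_, by
      simp [gr_zero]⟩
    rw [hx]
    simp only [map_one, Module.End.one_apply, add_zero, zero_smul, le_refl]
  have h0_anti : ∀ x : A, star x = -x → h₀ x = 0 := by
    intro x hx
    have h1 : h₀ x ≤ 0 := (hle x).trans (N_anti x (rp_anti x hx))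
    have h2 : h₀ (-x) ≤ 0 := by
      refine (hle (-x)).trans (N_anti (-x) ?_)
      rw [rp_neg, rp_anti x hx, neg_zero]
    rw [map_neg] at h2
    linarith
  have h0_ge : ∀ v : A, 0 ≤ v → |gr v| ≤ h₀ v := by
    intro v hv
    have hvsa : IsSelfAdjoint v := .of_nonneg hv
    have hrpv : rp (-v) = -v := rp_sa_eq (-v) hvsa.neg
    have k1 : h₀ (-v) ≤ -(gr v) := by
      refine (hle (-v)).trans (N_le _ _ ⟨1, one_coeff, by simp, v, 0, hv, le_refl 0, 0,
        le_refl 0, ?_, by simp [gr_zero]⟩)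
      rw [hrpv]
      simp
    have k2 : h₀ (-v) ≤ gr v := by
      refine (hle (-v)).trans (N_le _ _ ⟨1, one_coeff, by simp, 0, v, le_refl 0, hv, 0,
        le_refl 0, ?_, by simp [gr_zero]⟩)
      rw [hrpv]
      simp
    rw [map_neg] at k1 k2
    rw [abs_le]
    constructor <;> linarith
  have h0_inv : ∀ x, h₀ (α x) = h₀ x := by
    have diff : ∀ (c y : A), IsSelfAdjoint c → rp y = c - α c → h₀ y ≤ 0 := by
      intro c y hc hy
      have bound : ∀ n : ℕ, 1 ≤ n → h₀ y ≤ 2*G*(2*‖c‖/n) := by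
        intro n hn
        have hnpos : (0:ℝ) < n := by exact_mod_cast hn
        refine (hle y).trans (N_le _ _ ⟨Pn n, Pn_coeff n, Pn_eval n hn, 0, 0, le_refl 0,
          le_refl 0, 2*‖c‖/n, by positivity, ?_, by simp [gr_zero]⟩)
        rw [hy]
        simp only [add_zero]
        rw [T_Pn_telescope]
        have hsa : IsSelfAdjoint (c - (uEnd α ^ n) c) := by
          have h5 : IsSelfAdjoint ((uEnd α ^ n) c) := by
            rw [IsSelfAdjoint, ← upow_star, hc.star_eq]
          exact hc.sub h5
        have hnorm : ‖c - (uEnd α ^ n) c‖ ≤ 2*‖c‖ := by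
          have h1 := norm_sub_le c ((uEnd α ^ n) c)
          rw [upow_norm] at h1
          linarith
        calc (n:ℝ)⁻¹ • (c - (uEnd α ^ n) c) ≤ (n:ℝ)⁻¹ • ((2*‖c‖ : ℝ) • 1) := by
              refine rsmul_le_rsmul' (by positivity) ?_
              exact (sa_le_norm_smul_one hsa).trans (smul_one_le_smul_one hnorm)
          _ = (2*‖c‖/n : ℝ) • 1 := by rw [smul_smul]; congr 1; field_simp
      by_contra hpos
      push_neg at hpos
      obtain ⟨n, hn⟩ := exists_nat_gt (max 1 (2*G*(2*‖c‖) / h₀ y))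
      have hn1 : 1 ≤ n := by exact_mod_cast (le_max_left 1 _).trans hn.le
      have hnpos : (0:ℝ) < n := by exact_mod_cast hn1
      have h2 := bound n hn1
      have hgt : 2*G*(2*‖c‖) / h₀ y < n := (le_max_right _ _).trans_lt hn
      rw [div_lt_iff₀ hpos] at hgt
      have : 2*G*(2*‖c‖/n) < h₀ y := by
        rw [mul_div_assoc']
        rw [div_lt_iff₀ hnpos]
        calc 2*G*(2*‖c‖) < n * h₀ y := hgt
          _ = h₀ y * n := mul_comm _ _
      linarith
    intro x
    have rp_sub : ∀ a b : A, rp (a - b) = rp a - rp b := by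
      intro a b
      rw [sub_eq_add_neg, rp_add, rp_neg, sub_eq_add_neg]
    have d1 : h₀ (x - α x) ≤ 0 := by
      refine diff (rp x) _ (rp_sa x) ?_
      rw [rp_sub, rp_alpha]
    have d2 : h₀ (α x - x) ≤ 0 := by
      refine diff (-(rp x)) _ (rp_sa x).neg ?_
      rw [rp_sub, rp_alpha, map_neg, sub_neg_eq_add, neg_add_eq_sub]
    rw [map_sub] at d1 d2
    linarith
  exact ⟨h₀, h0_bound, h0_anti, h0_ge, h0_inv⟩


set_option maxHeartbeats 2000000 in
private lemma herm_zero {A : Type*} [NormedRing A] [StarRing A] [CStarRing A] [NormedAlgebra ℂ A]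
    [CompleteSpace A] [StarModule ℂ A] [PartialOrder A] [StarOrderedRing A] [Nontrivial A]
    (α : A ≃⋆ₐ[ℂ] A)
    (h : ∀ τ : fixedPointSubalgebra α →L[ℂ] ℂ,
      (τ 1 = 1 ∧ ∀ b : fixedPointSubalgebra α, 0 ≤ τ (star b * b)) →
      ∃! φ : A →L[ℂ] ℂ, (φ 1 = 1 ∧ ∀ a : A, 0 ≤ φ (star a * a)) ∧
        (∀ a : A, φ (α a) = φ a) ∧ (∀ b : fixedPointSubalgebra α, φ b = τ b))
    (g : A →L[ℂ] ℂ) (hherm : ∀ x, g (star x) = starRingEnd ℂ (g x))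
    (hinv : ∀ a, g (α a) = g a) (hfix : ∀ c : A, α c = c → g c = 0) : g = 0 := by
  obtain ⟨h₀, h0_bound, h0_anti, h0_ge, h0_inv⟩ := key_functional α g hinv
  set m := h₀ 1 with hm
  have hg1 : g 1 = 0 := hfix 1 (map_one α)
  have hone : (0:A) ≤ 1 := one_nonneg'
  have hm0 : (0:ℝ) ≤ m := by
    have h1 := h0_ge 1 hone
    rw [hg1] at h1
    simpa using h1
  have g_real : ∀ b : A, IsSelfAdjoint b → g b = ((g b).re : ℂ) := by
    intro b hb
    have h1 := hherm b
    rw [hb.star_eq] at h1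
    exact (Complex.conj_eq_iff_re.mp h1.symm).symm
  have decomp : ∀ x : A, ∃ b e : A, IsSelfAdjoint b ∧ IsSelfAdjoint e ∧ x = b + Complex.I • e := by
    intro x
    set b : A := (2:ℝ)⁻¹ • (x + star x) with hb
    have hbsa : IsSelfAdjoint b := by
      rw [IsSelfAdjoint, hb]
      simp only [star_smul, star_trivial, star_add, star_star]
      rw [add_comm]
    have h2b : b + b = x + star x := by
      rw [hb, ← two_smul ℝ, smul_smul]
      norm_num
    have hstar_d : star (x - b) = -(x - b) := by
      have hsx : star x = b + b - x := by rw [h2b]; abel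
      rw [star_sub, hbsa.star_eq, hsx]
      abel
    refine ⟨b, (-Complex.I) • (x - b), hbsa, ?_, ?_⟩
    · rw [IsSelfAdjoint, star_smul, hstar_d]
      rw [smul_neg, Complex.star_def, Complex.conj_neg_I, neg_smul]
    · have hII : Complex.I * -Complex.I = 1 := by
        rw [mul_neg, Complex.I_mul_I, neg_neg]
      rw [smul_smul, hII, one_smul]
      abel
  have g_zero_of : (∀ v : A, 0 ≤ v → (g v).re = 0) → g = 0 := by
    intro hpos
    have hsa0 : ∀ b : A, IsSelfAdjoint b → g b = 0 := by
      intro b hb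
      have hp : (0:A) ≤ ‖b‖ • 1 + b := by
        have h1 := sa_le_norm_smul_one hb.neg
        rw [norm_neg] at h1
        rw [← sub_nonneg] at h1
        rw [sub_neg_eq_add] at h1
        exact h1
      have hq : (0:A) ≤ ‖b‖ • 1 - b := sub_nonneg.2 (sa_le_norm_smul_one hb)
      have hbre : (g b).re = 0 := by
        have e1 : b = (2:ℝ)⁻¹ • (‖b‖ • 1 + b) - (2:ℝ)⁻¹ • (‖b‖ • (1:A) - b) := by
          rw [← smul_sub]
          have : (‖b‖ • 1 + b) - (‖b‖ • (1:A) - b) = b + b := by abel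
          rw [this, ← two_smul ℝ, smul_smul]
          norm_num
        have p1 := hpos _ (rsmul_nonneg' (by norm_num : (0:ℝ) ≤ 2⁻¹) hp)
        have p2 := hpos _ (rsmul_nonneg' (by norm_num : (0:ℝ) ≤ 2⁻¹) hq)
        rw [e1, map_sub]
        rw [Complex.sub_re, p1, p2]
        norm_num
      rw [g_real b hb, hbre]
      norm_num
    refine ContinuousLinearMap.ext fun x => ?_
    obtain ⟨b, e, hbsa, hesa, rfl⟩ := decomp x
    rw [map_add, map_smul, hsa0 b hbsa, hsa0 e hesa]
    simp
  by_cases hm' : m = 0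
  · -- degenerate case
    refine g_zero_of fun v hv => ?_
    have h1 := h0_ge v hv
    have h2 : h₀ v ≤ 0 := by
      have hq : (0:A) ≤ ‖v‖ • 1 - v := sub_nonneg.2 (sa_le_norm_smul_one (.of_nonneg hv))
      have h3 := (abs_nonneg _).trans (h0_ge _ hq)
      rw [map_sub, map_smul, smul_eq_mul, ← hm, hm', mul_zero] at h3
      linarith
    have := h1.trans h2
    exact abs_nonpos_iff.mp (h1.trans h2)
  · have hmpos : (0:ℝ) < m := lt_of_le_of_ne hm0 (Ne.symm hm')
    have hmC : (m:ℂ) ≠ 0 := Complex.ofReal_ne_zero.mpr hm'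
    set H₀ : A →L[ℝ] ℝ := LinearMap.mkContinuous h₀ (2*‖g‖) (fun x => by
      rw [Real.norm_eq_abs]
      exact (h0_bound x)) with hH₀
    have H₀_apply : ∀ x, H₀ x = h₀ x := fun x => rfl
    set Hc : A →L[ℂ] ℂ := H₀.extendTo𝕜' with hHc
    have Hc_apply : ∀ x, Hc x = (h₀ x : ℂ) - Complex.I * (h₀ (Complex.I • x) : ℂ) := by
      intro x
      rw [hHc]
      rfl
    have anti_I : ∀ b : A, IsSelfAdjoint b → star (Complex.I • b) = -(Complex.I • b) := by
      intro b hb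
      rw [star_smul, hb.star_eq, Complex.star_def, Complex.conj_I, neg_smul]
    have Hc_sa : ∀ b : A, IsSelfAdjoint b → Hc b = (h₀ b : ℂ) := by
      intro b hb
      rw [Hc_apply, h0_anti _ (anti_I b hb)]
      simp
    have Hc_inv : ∀ a, Hc (α a) = Hc a := by
      intro a
      have hsw : Complex.I • α a = α (Complex.I • a) := (map_smul α Complex.I a).symm
      rw [Hc_apply, Hc_apply, h0_inv, hsw, h0_inv]
    set Φ : A →L[ℂ] ℂ := (m:ℂ)⁻¹ • (Hc + g) with hΦ
    set Ψ : A →L[ℂ] ℂ := (m:ℂ)⁻¹ • (Hc - g) with hΨ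
    have apply_Φ : ∀ x, Φ x = (m:ℂ)⁻¹ * (Hc x + g x) := by
      intro x
      rw [hΦ]
      simp [mul_add]
    have apply_Ψ : ∀ x, Ψ x = (m:ℂ)⁻¹ * (Hc x - g x) := by
      intro x
      rw [hΨ]
      simp [mul_sub]
    have pos_core : ∀ s : ℝ, s = 1 ∨ s = -1 → ∀ a : A,
        0 ≤ (m:ℂ)⁻¹ * (Hc (star a * a) + (s:ℂ) * g (star a * a)) := by
      intro s hs a
      have hb : (0:A) ≤ star a * a := star_mul_self_nonneg a
      have hbsa : IsSelfAdjoint (star a * a) := .of_nonneg hb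
      rw [Hc_sa _ hbsa, g_real _ hbsa]
      have e1 : ((m:ℂ))⁻¹ * ((h₀ (star a * a) : ℂ) + (s:ℂ) * (((g (star a * a)).re : ℝ) : ℂ))
          = ((m⁻¹ * (h₀ (star a * a) + s * (g (star a * a)).re) : ℝ) : ℂ) := by
        push_cast
        ring
      rw [e1, Complex.zero_le_real]
      have h1 := abs_le.1 (h0_ge _ hb)
      have : (0:ℝ) ≤ h₀ (star a * a) + s * (g (star a * a)).re := by
        rcases hs with rfl | rfl <;> [skip; skip] <;> nlinarith [h1.1, h1.2]
      positivity
    -- inclusion of the fixed point algebra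
    set ι : fixedPointSubalgebra α →L[ℂ] A :=
      { toLinearMap :=
          { toFun := Subtype.val, map_add' := fun _ _ => rfl, map_smul' := fun _ _ => rfl },
        cont := continuous_subtype_val } with hι
    have ι_apply : ∀ b : fixedPointSubalgebra α, ι b = (b : A) := fun _ => rfl
    set τ : fixedPointSubalgebra α →L[ℂ] ℂ := Φ.comp ι with hτ
    have τ_apply : ∀ b : fixedPointSubalgebra α, τ b = Φ (b : A) := fun _ => rfl
    have h1sa : IsSelfAdjoint (1:A) := by rw [IsSelfAdjoint, star_one]
    have Φ_one : Φ 1 = 1 := by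
      rw [apply_Φ, Hc_sa 1 h1sa, hg1, ← hm]
      field_simp
      exact add_zero _
    have Φ_pos : ∀ a : A, 0 ≤ Φ (star a * a) := by
      intro a
      have := pos_core 1 (Or.inl rfl) a
      rw [apply_Φ]
      simpa using this
    have Φ_inv : ∀ a, Φ (α a) = Φ a := by
      intro a
      rw [apply_Φ, apply_Φ, Hc_inv, hinv]
    have Ψ_one : Ψ 1 = 1 := by
      rw [apply_Ψ, Hc_sa 1 h1sa, hg1, ← hm]
      field_simp
      exact sub_zero _
    have Ψ_pos : ∀ a : A, 0 ≤ Ψ (star a * a) := by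
      intro a
      have := pos_core (-1) (Or.inr rfl) a
      rw [apply_Ψ]
      have e : (Hc (star a * a) - g (star a * a))
          = (Hc (star a * a) + (((-1 : ℝ)) : ℂ) * g (star a * a)) := by
        push_cast
        ring
      rw [e]
      exact this
    have Ψ_inv : ∀ a, Ψ (α a) = Ψ a := by
      intro a
      rw [apply_Ψ, apply_Ψ, Hc_inv, hinv]
    have gfix : ∀ b : fixedPointSubalgebra α, g (b : A) = 0 := fun b => hfix _ b.2
    have τ_one : τ 1 = 1 := by
      rw [τ_apply, OneMemClass.coe_one, Φ_one]
    have τ_pos : ∀ b : fixedPointSubalgebra α, 0 ≤ τ (star b * b) := by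
      intro b
      rw [τ_apply]
      have : ((star b * b : fixedPointSubalgebra α) : A) = star (b : A) * (b : A) := by
        push_cast
        rfl
      rw [this]
      exact Φ_pos _
    obtain ⟨φ, -, huniq⟩ := h τ ⟨τ_one, τ_pos⟩
    have e1 : Φ = φ := huniq Φ ⟨⟨Φ_one, Φ_pos⟩, Φ_inv, fun b => (τ_apply b).symm⟩
    have e2 : Ψ = φ := by
      refine huniq Ψ ⟨⟨Ψ_one, Ψ_pos⟩, Ψ_inv, fun b => ?_⟩
      rw [τ_apply, apply_Ψ, apply_Φ, gfix b]
      ring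
    have eΦΨ : Φ = Ψ := e1.trans e2.symm
    refine ContinuousLinearMap.ext fun x => ?_
    have hx : Φ x = Ψ x := by rw [eΦΨ]
    rw [apply_Φ, apply_Ψ] at hx
    have hx2 := mul_left_cancel₀ (inv_ne_zero hmC) hx
    have : g x = 0 := by linear_combination hx2 / 2
    simpa using this


end Aux2

set_option maxHeartbeats 2000000

/-- If every state of the fixed-point subalgebra `A^α` has a unique
`α`-invariant state extension to `A`, then `A^α + {a - α a : a ∈ A}` is dense in `A`. -/
theorem dense_of_unique_invariant_state_extension {A : Type*} [NormedRing A] [StarRing A]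
    [CStarRing A] [NormedAlgebra ℂ A] [CompleteSpace A] [StarModule ℂ A]
    (α : A ≃⋆ₐ[ℂ] A)
    (h : ∀ τ : fixedPointSubalgebra α →L[ℂ] ℂ,
      (τ 1 = 1 ∧ ∀ b : fixedPointSubalgebra α, 0 ≤ τ (star b * b)) →
      ∃! φ : A →L[ℂ] ℂ, (φ 1 = 1 ∧ ∀ a : A, 0 ≤ φ (star a * a)) ∧
        (∀ a : A, φ (α a) = φ a) ∧ (∀ b : fixedPointSubalgebra α, φ b = τ b)) :
    Dense {x : A | ∃ c : A, α c = c ∧ ∃ a : A, x = c + (a - α a)} := by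
  rcases subsingleton_or_nontrivial A with hsub | hnt
  · intro x
    have hx : x = 0 := Subsingleton.elim x 0
    rw [hx]
    exact subset_closure ⟨0, map_zero α, 0, by simp⟩
  · letI : CStarAlgebra A := ⟨⟩
    letI : PartialOrder A := CStarAlgebra.spectralOrder A
    letI : StarOrderedRing A := CStarAlgebra.spectralOrderedRing A
    set S : Set A := {x | ∃ c : A, α c = c ∧ ∃ a : A, x = c + (a - α a)} with hSdef
    have Szero : (0:A) ∈ S := ⟨0, map_zero α, 0, by simp⟩
    have Sadd : ∀ x y, x ∈ S → y ∈ S → x + y ∈ S := by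
      rintro x y ⟨c, hc, a, rfl⟩ ⟨c', hc', a', rfl⟩
      refine ⟨c + c', by rw [map_add, hc, hc'], a + a', ?_⟩
      rw [map_add]
      abel
    have Ssmul : ∀ (z : ℂ) x, x ∈ S → z • x ∈ S := by
      rintro z x ⟨c, hc, a, rfl⟩
      refine ⟨z • c, by rw [map_smul, hc], z • a, ?_⟩
      rw [map_smul, smul_add, smul_sub]
    show Dense S
    by_contra hnd
    simp only [Dense, not_forall] at hnd
    obtain ⟨x0, hx0⟩ := hnd
    have hconv : Convex ℝ (closure S) := by
      refine Convex.closure ?_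
      intro p hp q hq a b _ _ _
      rw [← Complex.coe_smul, ← Complex.coe_smul]
      exact Sadd _ _ (Ssmul _ _ hp) (Ssmul _ _ hq)
    obtain ⟨F, u0, hFlt, hFgt⟩ := geometric_hahn_banach_point_closed hconv isClosed_closure hx0
    have hF0 : ∀ y ∈ S, F y = 0 := by
      intro y hy
      by_contra hne
      have key : ∀ t : ℝ, u0 < t * F y := by
        intro t
        have hty : (t • y) ∈ S := by
          rw [← Complex.coe_smul]
          exact Ssmul _ _ hy
        have := hFgt _ (subset_closure hty)
        rwa [map_smul, smul_eq_mul] at this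
      have h2 := key ((u0 - 1)/(F y))
      rw [div_mul_cancel₀ _ hne] at h2
      linarith
    have hu0 : u0 < 0 := by
      have := hFgt 0 (subset_closure Szero)
      rwa [map_zero] at this
    set f : A →L[ℂ] ℂ := F.extendTo𝕜' with hfdef
    have f_apply : ∀ x, f x = (F x : ℂ) - Complex.I * (F (Complex.I • x) : ℂ) := by
      intro x
      rw [hfdef]
      rfl
    have hfS : ∀ y ∈ S, f y = 0 := by
      intro y hy
      rw [f_apply, hF0 y hy, hF0 _ (Ssmul Complex.I y hy)]
      simp
    have hffix : ∀ c : A, α c = c → f c = 0 := fun c hc => hfS c ⟨c, hc, 0, by simp⟩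
    have hfinv : ∀ a : A, f (α a) = f a := by
      intro a
      have h2 : (α a - a) ∈ S := by
        refine ⟨0, map_zero α, -a, ?_⟩
        rw [map_neg]
        abel
      have h3 := hfS _ h2
      rw [map_sub, sub_eq_zero] at h3
      exact h3
    -- the conjugate-transpose functional
    set fs : A →L[ℂ] ℂ :=
      { toLinearMap :=
          { toFun := fun x => starRingEnd ℂ (f (star x)),
            map_add' := fun x y => by
              show starRingEnd ℂ (f (star (x + y)))
                  = starRingEnd ℂ (f (star x)) + starRingEnd ℂ (f (star y))
              rw [star_add, map_add, map_add],
            map_smul' := fun z x => by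
              show starRingEnd ℂ (f (star (z • x))) = RingHom.id ℂ z • starRingEnd ℂ (f (star x))
              rw [star_smul, map_smul, smul_eq_mul, map_mul, RingHom.id_apply,
                Complex.star_def, Complex.conj_conj, smul_eq_mul] },
        cont := continuous_star.comp (f.continuous.comp continuous_star) } with hfsdef
    have fs_apply : ∀ x, fs x = starRingEnd ℂ (f (star x)) := fun _ => rfl
    have fs_fix : ∀ c : A, α c = c → fs c = 0 := by
      intro c hc
      have hsc : α (star c) = star c := by rw [map_star, hc]
      rw [fs_apply, hffix _ hsc, map_zero]
    have fs_inv : ∀ a : A, fs (α a) = fs a := by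
      intro a
      rw [fs_apply, fs_apply, ← map_star α, hfinv]
    set g₁ : A →L[ℂ] ℂ := (2:ℂ)⁻¹ • (f + fs) with hg₁def
    set g₂ : A →L[ℂ] ℂ := (-(Complex.I)/2) • (f - fs) with hg₂def
    have g₁_apply : ∀ x, g₁ x = (2:ℂ)⁻¹ * (f x + fs x) := by
      intro x
      rw [hg₁def]
      simp [mul_add]
    have g₂_apply : ∀ x, g₂ x = (-(Complex.I)/2) * (f x - fs x) := by
      intro x
      rw [hg₂def]
      simp [mul_sub]
    have g₁_herm : ∀ x, g₁ (star x) = starRingEnd ℂ (g₁ x) := by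
      intro x
      rw [g₁_apply, g₁_apply, fs_apply, fs_apply, star_star, map_mul, map_add,
        Complex.conj_conj]
      have : starRingEnd ℂ (2:ℂ)⁻¹ = (2:ℂ)⁻¹ := by
        rw [map_inv₀, show (2:ℂ) = ((2:ℝ):ℂ) by norm_num, Complex.conj_ofReal]
      rw [this]
      ring
    have g₂_herm : ∀ x, g₂ (star x) = starRingEnd ℂ (g₂ x) := by
      intro x
      rw [g₂_apply, g₂_apply, fs_apply, fs_apply, star_star, map_mul, map_sub,
        Complex.conj_conj]
      have : starRingEnd ℂ (-(Complex.I)/2) = Complex.I/2 := by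
        rw [map_div₀, map_neg, Complex.conj_I, neg_neg,
          show (2:ℂ) = ((2:ℝ):ℂ) by norm_num, Complex.conj_ofReal]
      rw [this]
      ring
    have g₁_inv : ∀ a, g₁ (α a) = g₁ a := by
      intro a
      rw [g₁_apply, g₁_apply, hfinv, fs_inv]
    have g₂_inv : ∀ a, g₂ (α a) = g₂ a := by
      intro a
      rw [g₂_apply, g₂_apply, hfinv, fs_inv]
    have g₁_fix : ∀ c : A, α c = c → g₁ c = 0 := by
      intro c hc
      rw [g₁_apply, hffix c hc, fs_fix c hc]
      ring
    have g₂_fix : ∀ c : A, α c = c → g₂ c = 0 := by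
      intro c hc
      rw [g₂_apply, hffix c hc, fs_fix c hc]
      ring
    have hz₁ : g₁ = 0 := herm_zero α h g₁ g₁_herm g₁_inv g₁_fix
    have hz₂ : g₂ = 0 := herm_zero α h g₂ g₂_herm g₂_inv g₂_fix
    have hfx0 : f x0 = 0 := by
      have e1 : f x0 = g₁ x0 + Complex.I * g₂ x0 := by
        rw [g₁_apply, g₂_apply]
        linear_combination ((f x0 - fs x0)/2) * Complex.I_mul_I
      rw [e1, hz₁, hz₂]
      simp
    have hre : F x0 = 0 := by
      have := congrArg Complex.re hfx0
      rw [f_apply] at this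
      simpa using this
    have hFx0 : F x0 < u0 := hFlt
    linarith
end

section
/- Let A be a unital C*-algebra over ℂ and α a *-automorphism of A with fixed-point subalgebra A^α. Suppose that for every a ∈ A the ergodic averages Aₙ(a) = (1/n)·∑_{k=0}^{n-1} αᵏ(a) converge in norm. If E' : A → A is any α-invariant conditional expectation from A onto A^α, then E'(a) = lim_{n→∞} Aₙ(a) for every a ∈ A; in particular there is a unique α-invariant conditional expectation from A onto A^α. -/
open Filter Topology

/-- Auxiliary: a star-algebra automorphism of a C⋆-algebra is norm-preserving. -/
lemma starAlgEquiv_norm_map_aux {A : Type*} [inst : CStarAlgebra A] (α : A ≃⋆ₐ[ℂ] A) (x : A) :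
    ‖α x‖ = ‖x‖ :=
  StarAlgEquiv.norm_map α x

/-- If all ergodic averages converge in norm, then any `α`-invariant conditional
expectation `E'` from `A` onto the fixed-point subalgebra `A^α` is given by
`E'(a) = lim_n (1/n) ∑_{k<n} αᵏ(a)`; in particular it is unique. -/
theorem invariant_conditional_expectation_unique {A : Type*} [NormedRing A] [StarRing A]
    [CStarRing A] [NormedAlgebra ℂ A] [CompleteSpace A] [StarModule ℂ A]
    (α : A ≃⋆ₐ[ℂ] A)
    (hconv : ∀ a : A, ∃ L : A,
      Tendsto (fun n : ℕ => (n : ℂ)⁻¹ • ∑ k ∈ Finset.range n, (⇑α)^[k] a) atTop (𝓝 L))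
    (E' : A →L[ℂ] A)
    (hran : ∀ a : A, α (E' a) = E' a)
    (hfix : ∀ b : A, α b = b → E' b = b)
    (hnorm : ‖E'‖ = 1)
    (hinv : ∀ a : A, E' (α a) = E' a) :
    ∀ a : A,
      Tendsto (fun n : ℕ => (n : ℂ)⁻¹ • ∑ k ∈ Finset.range n, (⇑α)^[k] a) atTop (𝓝 (E' a)) := by
  have hnm : ∀ x : A, ‖α x‖ = ‖x‖ := fun x =>
    starAlgEquiv_norm_map_aux (A := A) (inst := { }) α x
  have hiso : Isometry (⇑α) := AddMonoidHomClass.isometry_of_norm α hnm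
  intro a
  obtain ⟨L, hL⟩ := hconv a
  set S : ℕ → A := fun n => (n : ℂ)⁻¹ • ∑ k ∈ Finset.range n, (⇑α)^[k] a with hS
  -- E' is constant (= E' a) on iterates
  have hit : ∀ k : ℕ, E' ((⇑α)^[k] a) = E' a := by
    intro k
    induction k with
    | zero => rfl
    | succ k ih => rw [Function.iterate_succ_apply', hinv, ih]
  -- E' (S n) = E' a for n ≥ 1
  have hES : ∀ n : ℕ, 1 ≤ n → E' (S n) = E' a := by
    intro n hn
    have hn0 : (n : ℂ) ≠ 0 := Nat.cast_ne_zero.mpr (by omega)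
    have : E' (S n) = (n : ℂ)⁻¹ • ∑ k ∈ Finset.range n, E' ((⇑α)^[k] a) := by
      simp [hS, map_smul, map_sum]
    rw [this]
    simp only [hit, Finset.sum_const, Finset.card_range,
      ← Nat.cast_smul_eq_nsmul ℂ, smul_smul, inv_mul_cancel₀ hn0, one_smul]
  -- α (S n) = S n + n⁻¹ • (α^[n] a - a)
  have hkey : ∀ n : ℕ, α (S n) = S n + (n : ℂ)⁻¹ • ((⇑α)^[n] a - a) := by
    intro n
    have hsum : α (∑ k ∈ Finset.range n, (⇑α)^[k] a)
        = (∑ k ∈ Finset.range n, (⇑α)^[k] a) + ((⇑α)^[n] a - a) := by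
      rw [map_sum]
      have h1 : ∑ k ∈ Finset.range n, α ((⇑α)^[k] a)
          = ∑ k ∈ Finset.range n, (⇑α)^[k + 1] a := by
        refine Finset.sum_congr rfl fun k _ => ?_
        rw [Function.iterate_succ_apply']
      have h2 := Finset.sum_range_succ' (fun k => (⇑α)^[k] a) n
      have h3 := Finset.sum_range_succ (fun k => (⇑α)^[k] a) n
      have h4 : (∑ k ∈ Finset.range n, (⇑α)^[k + 1] a) + a
          = (∑ k ∈ Finset.range n, (⇑α)^[k] a) + (⇑α)^[n] a := by
        simpa using h2.symm.trans h3
      rw [h1, eq_sub_iff_add_eq.mpr h4.symm]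
      abel
    simp only [hS, map_smul, hsum, smul_add]
  -- the perturbation tends to 0
  have hitn : ∀ n : ℕ, ‖(⇑α)^[n] a‖ = ‖a‖ := by
    intro n
    induction n with
    | zero => rfl
    | succ n ih => rw [Function.iterate_succ_apply', hnm, ih]
  have hpert : Tendsto (fun n : ℕ => (n : ℂ)⁻¹ • ((⇑α)^[n] a - a)) atTop (𝓝 0) := by
    have hbound : ∀ n : ℕ, ‖(n : ℂ)⁻¹ • ((⇑α)^[n] a - a)‖ ≤ (n : ℝ)⁻¹ * (2 * ‖a‖) := by
      intro n
      rw [norm_smul]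
      have h1 : ‖((n : ℕ) : ℂ)⁻¹‖ = ((n : ℕ) : ℝ)⁻¹ := by simp
      rw [h1]
      gcongr
      calc ‖(⇑α)^[n] a - a‖ ≤ ‖(⇑α)^[n] a‖ + ‖a‖ := norm_sub_le _ _
          _ ≤ 2 * ‖a‖ := by rw [hitn]; linarith
    have h0 : Tendsto (fun n : ℕ => (n : ℝ)⁻¹ * (2 * ‖a‖)) atTop (𝓝 0) := by
      simpa using (tendsto_inv_atTop_nhds_zero_nat.mul_const (2 * ‖a‖))
    exact squeeze_zero_norm hbound h0
  -- α L = L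
  have hαL : α L = L := by
    have h1 : Tendsto (fun n => α (S n)) atTop (𝓝 (α L)) :=
      (hiso.continuous.tendsto L).comp hL
    have h2 : Tendsto (fun n => α (S n)) atTop (𝓝 L) := by
      simp only [hkey]
      simpa using hL.add hpert
    exact tendsto_nhds_unique h1 h2
  -- E' L = L and E' L = E' a, hence L = E' a
  have hEL : E' L = L := hfix L hαL
  have h3 : Tendsto (fun n => E' (S n)) atTop (𝓝 (E' L)) :=
    (E'.continuous.tendsto L).comp hL
  have h4 : Tendsto (fun n => E' (S n)) atTop (𝓝 (E' a)) := by
    refine Tendsto.congr' ?_ tendsto_const_nhds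
    filter_upwards [eventually_ge_atTop 1] with n hn
    exact (hES n hn).symm
  have hEa : E' L = E' a := tendsto_nhds_unique h3 h4
  have hLa : L = E' a := hEL.symm.trans hEa
  rw [← hLa]
  exact hL
end

section
/- Let A be a unital C*-algebra over ℂ and α a *-automorphism of A with fixed-point subalgebra A^α. Suppose that for every a ∈ A the ergodic averages Aₙ(a) = (1/n)·∑_{k=0}^{n-1} αᵏ(a) converge in norm, and let E(a) = lim_{n→∞} Aₙ(a). Then every bounded linear functional τ : A^α → ℂ has a unique bounded linear extension φ : A → ℂ satisfying φ ∘ α = φ, namely φ = τ ∘ E. -/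
open Filter Topology

section Aux

set_option linter.unusedSectionVars false

variable {A : Type*} [NormedRing A] [StarRing A] [NormedAlgebra ℂ A] [StarModule ℂ A]
  (α : A ≃⋆ₐ[ℂ] A)

lemma aux_iter_add (k : ℕ) (a b : A) :
    (⇑α)^[k] (a + b) = (⇑α)^[k] a + (⇑α)^[k] b := by
  induction k with
  | zero => simp
  | succ k ih => simp [Function.iterate_succ_apply', ih, map_add]

lemma aux_iter_smul (k : ℕ) (c : ℂ) (a : A) :
    (⇑α)^[k] (c • a) = c • (⇑α)^[k] a := by
  induction k with
  | zero => simp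
  | succ k ih => simp [Function.iterate_succ_apply', ih, map_smul]

lemma aux_iter_fixed (k : ℕ) {a : A} (ha : α a = a) : (⇑α)^[k] a = a := by
  induction k with
  | zero => simp
  | succ k ih => simp [Function.iterate_succ_apply', ih, ha]

end Aux

/-- If all ergodic averages converge in norm, with limit map `E`, then every
bounded linear functional `τ` on the fixed-point subalgebra `A^α` has a unique bounded
`α`-invariant linear extension to `A`, namely `τ ∘ E`. -/
theorem unique_invariant_functional_extension {A : Type*} [NormedRing A] [StarRing A]
    [CStarRing A] [NormedAlgebra ℂ A] [CompleteSpace A] [StarModule ℂ A]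
    (α : A ≃⋆ₐ[ℂ] A) (E : A → A)
    (hE : ∀ a : A,
      Tendsto (fun n : ℕ => (n : ℂ)⁻¹ • ∑ k ∈ Finset.range n, (⇑α)^[k] a) atTop (𝓝 (E a))) :
    ∀ τ : fixedPointSubalgebra α →L[ℂ] ℂ,
      (∃! φ : A →L[ℂ] ℂ,
        (∀ b : fixedPointSubalgebra α, φ b = τ b) ∧ ∀ a : A, φ (α a) = φ a) ∧
      (∀ φ : A →L[ℂ] ℂ,
        ((∀ b : fixedPointSubalgebra α, φ b = τ b) ∧ ∀ a : A, φ (α a) = φ a) →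
        ∀ a : A, ∀ h : α (E a) = E a, φ a = τ ⟨E a, h⟩) := by
  letI : CStarAlgebra A := ⟨⟩
  intro τ
  have hnorm : ∀ a : A, ‖α a‖ = ‖a‖ := fun a => StarAlgEquiv.norm_map α a
  have hcont : Continuous ⇑α := (StarAlgEquiv.isometry α).continuous
  have hiter_norm : ∀ (k : ℕ) (a : A), ‖(⇑α)^[k] a‖ = ‖a‖ := by
    intro k
    induction k with
    | zero => simp
    | succ k ih => intro a; rw [Function.iterate_succ_apply', hnorm, ih]
  -- `E (α a) = E a`
  have hEinv : ∀ a : A, E (α a) = E a := by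
    intro a
    refine tendsto_nhds_unique (hE (α a)) ?_
    have key : ∀ n : ℕ,
        (n : ℂ)⁻¹ • ∑ k ∈ Finset.range n, (⇑α)^[k] (α a)
        = ((n : ℂ)⁻¹ • ∑ k ∈ Finset.range n, (⇑α)^[k] a)
          + (n : ℂ)⁻¹ • ((⇑α)^[n] a - a) := by
      intro n
      have h1 : ∑ k ∈ Finset.range n, (⇑α)^[k] (α a)
          = (∑ k ∈ Finset.range n, (⇑α)^[k] a) + ((⇑α)^[n] a - a) := by
        have h2 : ∀ k : ℕ, (⇑α)^[k] (α a) = (⇑α)^[k + 1] a := by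
          intro k; rw [Function.iterate_succ_apply]
        calc ∑ k ∈ Finset.range n, (⇑α)^[k] (α a)
            = ∑ k ∈ Finset.range n, (⇑α)^[k + 1] a := by
              exact Finset.sum_congr rfl fun k _ => h2 k
          _ = ∑ k ∈ Finset.range (n + 1), (⇑α)^[k] a - (⇑α)^[0] a := by
              rw [Finset.sum_range_succ']; abel
          _ = (∑ k ∈ Finset.range n, (⇑α)^[k] a) + ((⇑α)^[n] a - a) := by
              rw [Finset.sum_range_succ]; simp; abel
      rw [h1, smul_add]
    have hzero : Tendsto (fun n : ℕ => (n : ℂ)⁻¹ • ((⇑α)^[n] a - a)) atTop (𝓝 0) := by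
      have hbound : ∀ n : ℕ, ‖(n : ℂ)⁻¹ • ((⇑α)^[n] a - a)‖ ≤ (n : ℝ)⁻¹ * (2 * ‖a‖) := by
        intro n
        rw [norm_smul, norm_inv, Complex.norm_natCast]
        refine mul_le_mul_of_nonneg_left ?_ (by positivity)
        calc ‖(⇑α)^[n] a - a‖ ≤ ‖(⇑α)^[n] a‖ + ‖a‖ := norm_sub_le _ _
          _ = 2 * ‖a‖ := by rw [hiter_norm]; ring
      refine squeeze_zero_norm hbound ?_
      have := (tendsto_inv_atTop_nhds_zero_nat (𝕜 := ℝ)).mul_const (2 * ‖a‖)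
      simpa using this
    have := (hE a).add hzero
    rw [add_zero] at this
    exact this.congr fun n => (key n).symm
  -- `α (E a) = E a`
  have hEfix : ∀ a : A, α (E a) = E a := by
    intro a
    have h2 : Tendsto (fun n : ℕ =>
        α ((n : ℂ)⁻¹ • ∑ k ∈ Finset.range n, (⇑α)^[k] a)) atTop (𝓝 (α (E a))) :=
      (hcont.tendsto _).comp (hE a)
    have heq : ∀ n : ℕ, α ((n : ℂ)⁻¹ • ∑ k ∈ Finset.range n, (⇑α)^[k] a)
        = (n : ℂ)⁻¹ • ∑ k ∈ Finset.range n, (⇑α)^[k] (α a) := by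
      intro n
      rw [map_smul, map_sum]
      congr 1
      refine Finset.sum_congr rfl fun k _ => ?_
      rw [← Function.iterate_succ_apply' α, Function.iterate_succ_apply]
    have h3 : Tendsto (fun n : ℕ =>
        (n : ℂ)⁻¹ • ∑ k ∈ Finset.range n, (⇑α)^[k] (α a)) atTop (𝓝 (α (E a))) :=
      h2.congr fun n => heq n
    have := tendsto_nhds_unique h3 (hE (α a))
    rw [this, hEinv]
  -- `E` is the identity on fixed points
  have hEid : ∀ b : A, α b = b → E b = b := by
    intro b hb
    refine tendsto_nhds_unique (hE b) ?_
    refine Tendsto.congr' ?_ tendsto_const_nhds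
    filter_upwards [eventually_ge_atTop 1] with n hn
    have : ∑ k ∈ Finset.range n, (⇑α)^[k] b = (n : ℕ) • b := by
      rw [Finset.sum_congr rfl fun k _ => aux_iter_fixed α k hb]
      simp
    rw [this, ← Nat.cast_smul_eq_nsmul ℂ, smul_smul,
      inv_mul_cancel₀ (by exact_mod_cast Nat.one_le_iff_ne_zero.mp hn), one_smul]
  -- norm bound for `E`
  have hEnorm : ∀ a : A, ‖E a‖ ≤ ‖a‖ := by
    intro a
    refine le_of_tendsto (hE a).norm ?_
    filter_upwards [eventually_ge_atTop 1] with n hn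
    have hn' : (n : ℝ) ≠ 0 := by exact_mod_cast Nat.one_le_iff_ne_zero.mp hn
    rw [norm_smul, norm_inv, Complex.norm_natCast]
    calc (n : ℝ)⁻¹ * ‖∑ k ∈ Finset.range n, (⇑α)^[k] a‖
        ≤ (n : ℝ)⁻¹ * ∑ k ∈ Finset.range n, ‖(⇑α)^[k] a‖ := by
          refine mul_le_mul_of_nonneg_left (norm_sum_le _ _) (by positivity)
      _ = (n : ℝ)⁻¹ * ((n : ℝ) * ‖a‖) := by
          rw [Finset.sum_congr rfl fun k _ => hiter_norm k a]
          simp [Finset.sum_const, mul_comm]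
      _ = ‖a‖ := by field_simp
  -- linearity of `E`
  have hEadd : ∀ a b : A, E (a + b) = E a + E b := by
    intro a b
    refine tendsto_nhds_unique (hE (a + b)) ?_
    have := (hE a).add (hE b)
    refine this.congr fun n => ?_
    rw [← smul_add, ← Finset.sum_add_distrib]
    congr 1
    exact Finset.sum_congr rfl fun k _ => (aux_iter_add α k a b).symm
  have hEsmul : ∀ (c : ℂ) (a : A), E (c • a) = c • E a := by
    intro c a
    refine tendsto_nhds_unique (hE (c • a)) ?_
    have := (hE a).const_smul c
    refine this.congr fun n => ?_
    rw [smul_comm, Finset.smul_sum]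
    congr 1
    exact Finset.sum_congr rfl fun k _ => (aux_iter_smul α k c a).symm
  -- the bundled map `a ↦ ⟨E a, _⟩ : A →L[ℂ] A^α`
  let Elin : A →ₗ[ℂ] fixedPointSubalgebra α :=
    { toFun := fun a => ⟨E a, hEfix a⟩
      map_add' := fun a b => Subtype.ext (hEadd a b)
      map_smul' := fun c a => Subtype.ext (hEsmul c a) }
  let Econt : A →L[ℂ] fixedPointSubalgebra α :=
    Elin.mkContinuous 1 fun a => by
      show ‖E a‖ ≤ 1 * ‖a‖
      simpa using hEnorm a
  let φ₀ : A →L[ℂ] ℂ := τ.comp Econt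
  have hφ₀ext : ∀ b : fixedPointSubalgebra α, φ₀ b = τ b := by
    intro b
    show τ ⟨E (b : A), _⟩ = τ b
    congr 1
    exact Subtype.ext (hEid (b : A) b.2)
  have hφ₀inv : ∀ a : A, φ₀ (α a) = φ₀ a := by
    intro a
    show τ ⟨E (α a), _⟩ = τ ⟨E a, _⟩
    congr 1
    exact Subtype.ext (hEinv a)
  -- any invariant extension equals `τ ∘ E`
  have huniq : ∀ φ : A →L[ℂ] ℂ,
      ((∀ b : fixedPointSubalgebra α, φ b = τ b) ∧ ∀ a : A, φ (α a) = φ a) →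
      ∀ a : A, ∀ h : α (E a) = E a, φ a = τ ⟨E a, h⟩ := by
    intro φ ⟨hext, hinv⟩ a h
    have hiter : ∀ k : ℕ, φ ((⇑α)^[k] a) = φ a := by
      intro k
      induction k with
      | zero => simp
      | succ k ih => rw [Function.iterate_succ_apply', hinv, ih]
    have havg : ∀ᶠ n : ℕ in atTop,
        φ ((n : ℂ)⁻¹ • ∑ k ∈ Finset.range n, (⇑α)^[k] a) = φ a := by
      filter_upwards [eventually_ge_atTop 1] with n hn
      rw [map_smul, map_sum]
      rw [Finset.sum_congr rfl fun k _ => hiter k]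
      simp only [Finset.sum_const, Finset.card_range, smul_eq_mul]
      rw [nsmul_eq_mul, ← mul_assoc,
        inv_mul_cancel₀ (by exact_mod_cast Nat.one_le_iff_ne_zero.mp hn), one_mul]
    have h1 : Tendsto (fun n : ℕ =>
        φ ((n : ℂ)⁻¹ • ∑ k ∈ Finset.range n, (⇑α)^[k] a)) atTop (𝓝 (φ (E a))) :=
      (φ.continuous.tendsto _).comp (hE a)
    have h2 : φ a = φ (E a) :=
      tendsto_nhds_unique (h1.congr' (havg.mono fun n hn => hn)) tendsto_const_nhds |>.symm
    rw [h2]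
    exact hext ⟨E a, h⟩
  refine ⟨⟨φ₀, ⟨hφ₀ext, hφ₀inv⟩, ?_⟩, huniq⟩
  intro ψ hψ
  ext a
  rw [huniq ψ hψ a (hEfix a), huniq φ₀ ⟨hφ₀ext, hφ₀inv⟩ a (hEfix a)]
end

section
/- Let A be a unital C*-algebra over ℂ and α a *-automorphism of A. Then α is uniquely ergodic (i.e. there is exactly one state φ of A with φ ∘ α = φ) if and only if for every a ∈ A the ergodic averages Aₙ(a) = (1/n)·∑_{k=0}^{n-1} αᵏ(a) converge in norm to a scalar multiple of the identity. Moreover, in this case the unique α-invariant state φ satisfies Aₙ(a) → φ(a)·1 in norm for every a ∈ A. -/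
open scoped ComplexOrder ComplexStarModule
open Filter Topology

namespace UniqErg9

lemma isClosed_nonneg_complex : IsClosed {z : ℂ | 0 ≤ z} := by
  have : {z : ℂ | 0 ≤ z} = Complex.re ⁻¹' Set.Ici 0 ∩ Complex.im ⁻¹' {0} := by
    ext z
    simp only [Set.mem_setOf_eq, Complex.le_def, Set.mem_inter_iff, Set.mem_preimage,
      Set.mem_Ici, Set.mem_singleton_iff, Complex.zero_re, Complex.zero_im]
    tauto
  rw [this]
  exact (isClosed_Ici.preimage Complex.continuous_re).inter
    (isClosed_singleton.preimage Complex.continuous_im)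

lemma inv_natCast_nonneg (n : ℕ) : (0 : ℂ) ≤ (n : ℂ)⁻¹ := by
  have : ((((n : ℝ)⁻¹ : ℝ)) : ℂ) = (n : ℂ)⁻¹ := by push_cast; ring
  rw [← this]
  rw [Complex.zero_le_real]
  positivity

lemma norm_eq_abs_re_of_im_zero {z : ℂ} (hz : z.im = 0) : ‖z‖ = |z.re| := by
  have : z = (z.re : ℂ) := Complex.ext rfl (by simp [hz])
  rw [this, Complex.norm_real, Real.norm_eq_abs]
  simp

section

variable {A : Type*} [CStarAlgebra A] [Nontrivial A]

/-- For a selfadjoint element `h` there is a norm-one unital functional attaining `‖h‖`. -/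
lemma exists_norming_functional (h : A) (hh : IsSelfAdjoint h) :
    ∃ g : A →L[ℂ] ℂ, ‖g‖ ≤ 1 ∧ g 1 = 1 ∧ ‖g h‖ = ‖h‖ := by
  haveI : IsStarNormal h := hh.isStarNormal
  set S := StarAlgebra.elemental ℂ h with hS
  haveI : IsClosed (S : Set A) := StarAlgebra.elemental.isClosed ℂ h
  haveI : Nontrivial S := ⟨1, 0, fun H => one_ne_zero (α := A) (by
    simpa using congrArg Subtype.val H)⟩
  set c : S := ⟨h, StarAlgebra.elemental.self_mem ℂ h⟩ with hc
  obtain ⟨z, hz, hz2⟩ := spectrum.exists_nnnorm_eq_spectralRadius (a := c)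
  have hcsa : IsSelfAdjoint c := by ext1; exact hh
  have hz3 : ‖z‖ = ‖h‖ := by
    have := hz2.trans hcsa.spectralRadius_eq_nnnorm
    have h4 : ‖c‖ = ‖h‖ := rfl
    exact_mod_cast congrArg ENNReal.toReal this |>.trans (by simp [h4])
  obtain ⟨f, hf⟩ := WeakDual.CharacterSpace.mem_spectrum_iff_exists.mp hz
  set p : Submodule ℂ A := Subalgebra.toSubmodule S.toSubalgebra with hp
  have hmem : ∀ x : p, (x : A) ∈ S := fun x => x.2
  let f₀ : p →ₗ[ℂ] ℂ :=
    { toFun := fun x => f ⟨x.1, hmem x⟩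
      map_add' := fun x y => by
        rw [← map_add f]; congr 1
      map_smul' := fun m x => by
        simp only [RingHom.id_apply]
        rw [← map_smul f]
        exact congrArg f (Subtype.ext rfl) }
  have hf₀bound : ∀ x : p, ‖f₀ x‖ ≤ 1 * ‖x‖ := by
    intro x
    rw [one_mul]
    have hmem2 : f ⟨x.1, hmem x⟩ ∈ spectrum ℂ (⟨x.1, hmem x⟩ : S) :=
      WeakDual.CharacterSpace.apply_mem_spectrum f _
    have hb := spectrum.norm_le_norm_of_mem hmem2
    exact hb

  let f₁ : p →L[ℂ] ℂ := LinearMap.mkContinuous f₀ 1 hf₀bound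
  obtain ⟨g, hg1, hg2⟩ := exists_extension_norm_eq p f₁
  have hgn : ‖g‖ ≤ 1 := hg2.le.trans (LinearMap.mkContinuous_norm_le f₀ zero_le_one hf₀bound)
  have hone : (1 : A) ∈ p := one_mem S
  have hh' : h ∈ p := StarAlgebra.elemental.self_mem ℂ h
  refine ⟨g, hgn, ?_, ?_⟩
  · have := hg1 ⟨1, hone⟩
    simpa using this.trans (map_one f)
  · have := hg1 ⟨h, hh'⟩
    have : g h = z := by
      rw [this]; exact hf
    rw [this, hz3]
lemma im_apply_eq_zero (g : A →L[ℂ] ℂ) (hg : ‖g‖ ≤ 1) (h1 : g 1 = 1)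
    {x : A} (hx : IsSelfAdjoint x) : (g x).im = 0 := by
  have key : ∀ t : ℝ, 2 * (g x).im * t ≤ ‖x‖ ^ 2 - (g x).re ^ 2 - (g x).im ^ 2 := by
    intro t
    set u := x + ((t : ℂ) * Complex.I) • 1 with hu
    have hsu : star u * u = x * x + (((t : ℝ) ^ 2 : ℝ) : ℂ) • 1 := by
      have hstar : star u = x - ((t : ℂ) * Complex.I) • 1 := by
        simp [hu, star_add, star_smul, hx.star_eq, star_one, map_mul, Complex.conj_I,
          Complex.conj_ofReal, sub_eq_add_neg, neg_smul]
      rw [hstar, hu]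
      have hII : ((t : ℂ) * Complex.I) * ((t : ℂ) * Complex.I) = -(((t : ℝ) ^ 2 : ℝ) : ℂ) := by
        push_cast
        ring_nf
        simp [Complex.I_sq]
      simp only [mul_add, sub_mul, smul_mul_assoc, mul_smul_comm, one_mul, mul_one,
        smul_add, smul_smul, hII, neg_smul]
      match_scalars <;> (try ring) <;> (simp [Complex.I_sq]; try ring)
    have hnu : ‖u‖ ^ 2 ≤ ‖x‖ ^ 2 + t ^ 2 := by
      have h2 : ‖u‖ ^ 2 = ‖star u * u‖ := by
        rw [CStarRing.norm_star_mul_self, sq]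
      rw [h2, hsu]
      refine (norm_add_le _ _).trans ?_
      have hxx : ‖x * x‖ ≤ ‖x‖ ^ 2 := by rw [sq]; exact norm_mul_le x x
      have h3 : ‖((((t : ℝ) ^ 2 : ℝ)) : ℂ) • (1 : A)‖ = t ^ 2 := by
        rw [norm_smul, norm_one, mul_one, Complex.norm_real, Real.norm_eq_abs,
          abs_of_nonneg (sq_nonneg t)]
      linarith
    have hgu : g u = g x + (t : ℂ) * Complex.I := by
      rw [hu, map_add, map_smul, h1, smul_eq_mul, mul_one]
    have hval : ‖g u‖ ≤ ‖u‖ := by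
      simpa using g.le_of_opNorm_le hg u
    have hval2 : ‖g u‖ ^ 2 ≤ ‖x‖ ^ 2 + t ^ 2 :=
      le_trans (by exact pow_le_pow_left₀ (norm_nonneg _) hval 2) hnu
    have hexp : ‖g u‖ ^ 2 = (g x).re ^ 2 + ((g x).im + t) ^ 2 := by
      rw [hgu, Complex.sq_norm, Complex.normSq_apply]
      simp [Complex.add_re, Complex.add_im, Complex.mul_re, Complex.mul_im]
      ring
    nlinarith [hval2, hexp]
  by_contra him
  set C := ‖x‖ ^ 2 - (g x).re ^ 2 - (g x).im ^ 2 with hC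
  have h1t := key ((C + 1) / (2 * (g x).im))
  have heq : 2 * (g x).im * ((C + 1) / (2 * (g x).im)) = C + 1 := by
    field_simp
  rw [heq] at h1t
  linarith

lemma pos_of_norm_le_one (g : A →L[ℂ] ℂ) (hg : ‖g‖ ≤ 1) (h1 : g 1 = 1) (a : A) :
    0 ≤ g (star a * a) := by
  set b := star a * a with hb
  have hbsa : IsSelfAdjoint b := IsSelfAdjoint.star_mul_self a
  have him : (g b).im = 0 := im_apply_eq_zero g hg h1 hbsa
  -- norm bound ‖algebraMap ℝ A ‖b‖ - b‖ ≤ ‖b‖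
  have hres : SpectrumRestricts b ContinuousMap.realToNNReal := by
    rw [SpectrumRestricts.nnreal_iff]
    exact spectrum_star_mul_self_nonneg
  have hkey : ‖algebraMap ℝ A ‖b‖ - b‖₊ ≤ ‖b‖₊ :=
    (SpectrumRestricts.nnreal_iff_nnnorm hbsa le_rfl).mp hres
  have hkey' : ‖b - algebraMap ℝ A ‖b‖‖ ≤ ‖b‖ := by
    rw [← norm_neg, neg_sub]
    exact_mod_cast hkey
  have halg : (algebraMap ℝ A ‖b‖ : A) = ((‖b‖ : ℂ)) • (1 : A) := by
    rw [Algebra.algebraMap_eq_smul_one]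
    norm_num
  have hgb : ‖g b - (‖b‖ : ℂ)‖ ≤ ‖b‖ := by
    have := g.le_of_opNorm_le hg (b - algebraMap ℝ A ‖b‖)
    rw [one_mul, map_sub] at this
    have h2 : g (algebraMap ℝ A ‖b‖) = (‖b‖ : ℂ) := by
      rw [halg, map_smul, h1, smul_eq_mul, mul_one]
    rw [h2] at this
    exact this.trans hkey'
  -- conclude
  rw [Complex.le_def]
  refine ⟨?_, him.symm⟩
  simp only [Complex.zero_re]
  have : |(g b).re - ‖b‖| ≤ ‖b‖ := by
    have h3 : ((g b) - (‖b‖ : ℂ)).re = (g b).re - ‖b‖ := by simp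
    calc |(g b).re - ‖b‖| = |((g b) - (‖b‖ : ℂ)).re| := by rw [h3]
    _ ≤ ‖(g b) - (‖b‖ : ℂ)‖ := Complex.abs_re_le_norm _
    _ ≤ ‖b‖ := hgb
  have := abs_le.mp this
  linarith [this.1]

lemma exists_state_half (b : A) :
    ∃ g : A →L[ℂ] ℂ, ‖g‖ ≤ 1 ∧ g 1 = 1 ∧ ‖b‖ ≤ 2 * ‖g b‖ := by
  set h := (ℜ b : A) with hh
  set k := (ℑ b : A) with hk
  have hdecomp : h + Complex.I • k = b := realPart_add_I_smul_imaginaryPart b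
  have hnb : ‖b‖ ≤ ‖h‖ + ‖k‖ := by
    calc ‖b‖ = ‖h + Complex.I • k‖ := by rw [hdecomp]
    _ ≤ ‖h‖ + ‖Complex.I • k‖ := norm_add_le _ _
    _ = ‖h‖ + ‖k‖ := by rw [norm_smul]; simp
  rcases le_total ‖k‖ ‖h‖ with hmax | hmax
  · obtain ⟨g, hg1, hg2, hg3⟩ := exists_norming_functional h (ℜ b).2
    refine ⟨g, hg1, hg2, ?_⟩
    have himh : (g h).im = 0 := im_apply_eq_zero g hg1 hg2 (ℜ b).2
    have himk : (g k).im = 0 := im_apply_eq_zero g hg1 hg2 (ℑ b).2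
    have hgb : g b = g h + Complex.I * g k := by
      rw [← hdecomp, map_add, map_smul, smul_eq_mul]
    have hre : (g b).re = (g h).re := by
      rw [hgb]; simp [Complex.add_re, Complex.mul_re, himk]
    have : ‖h‖ ≤ ‖g b‖ := by
      calc ‖h‖ = ‖g h‖ := hg3.symm
      _ = |(g h).re| := norm_eq_abs_re_of_im_zero himh
      _ = |(g b).re| := by rw [hre]
      _ ≤ ‖g b‖ := Complex.abs_re_le_norm _
    linarith
  · obtain ⟨g, hg1, hg2, hg3⟩ := exists_norming_functional k (ℑ b).2
    refine ⟨g, hg1, hg2, ?_⟩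
    have himh : (g h).im = 0 := im_apply_eq_zero g hg1 hg2 (ℜ b).2
    have himk : (g k).im = 0 := im_apply_eq_zero g hg1 hg2 (ℑ b).2
    have hgb : g b = g h + Complex.I * g k := by
      rw [← hdecomp, map_add, map_smul, smul_eq_mul]
    have hre : (g b).im = (g k).re := by
      rw [hgb]; simp [Complex.add_im, Complex.mul_im, himh, himk]
    have : ‖k‖ ≤ ‖g b‖ := by
      calc ‖k‖ = ‖g k‖ := hg3.symm
      _ = |(g k).re| := norm_eq_abs_re_of_im_zero himk
      _ = |(g b).im| := by rw [hre]
      _ ≤ ‖g b‖ := Complex.abs_im_le_norm _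
    linarith
variable (α : A ≃⋆ₐ[ℂ] A)

lemma iter_map_one (n : ℕ) : (⇑α)^[n] (1 : A) = 1 := by
  induction n with
  | zero => rfl
  | succ n ih => rw [Function.iterate_succ_apply', ih, map_one]

lemma iter_map_add (n : ℕ) (a b : A) : (⇑α)^[n] (a + b) = (⇑α)^[n] a + (⇑α)^[n] b := by
  induction n with
  | zero => rfl
  | succ n ih => rw [Function.iterate_succ_apply', ih, map_add,
      Function.iterate_succ_apply', Function.iterate_succ_apply']

lemma iter_map_smul (n : ℕ) (c : ℂ) (a : A) : (⇑α)^[n] (c • a) = c • (⇑α)^[n] a := by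
  induction n with
  | zero => rfl
  | succ n ih => rw [Function.iterate_succ_apply', ih, map_smul,
      Function.iterate_succ_apply']

lemma iter_map_star_mul_self (n : ℕ) (a : A) :
    (⇑α)^[n] (star a * a) = star ((⇑α)^[n] a) * (⇑α)^[n] a := by
  induction n with
  | zero => rfl
  | succ n ih => rw [Function.iterate_succ_apply', ih, map_mul, map_star]; simp [Function.iterate_succ_apply']

lemma iter_norm (n : ℕ) (a : A) : ‖(⇑α)^[n] a‖ = ‖a‖ := by
  induction n with
  | zero => rfl
  | succ n ih => rw [Function.iterate_succ_apply', StarAlgEquiv.norm_map, ih]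

/-- The ergodic average. -/
noncomputable def erg (n : ℕ) (a : A) : A := (n : ℂ)⁻¹ • ∑ k ∈ Finset.range n, (⇑α)^[k] a

lemma erg_one {n : ℕ} (hn : 1 ≤ n) : erg α n (1 : A) = 1 := by
  unfold erg
  rw [Finset.sum_congr rfl fun k _ => iter_map_one α k, Finset.sum_const,
    Finset.card_range, ← Nat.cast_smul_eq_nsmul ℂ, smul_smul]
  rw [inv_mul_cancel₀ (by exact_mod_cast Nat.pos_of_ne_zero (by omega) |>.ne'), one_smul]

lemma erg_norm_le (n : ℕ) (a : A) : ‖erg α n a‖ ≤ ‖a‖ := by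
  unfold erg
  rw [norm_smul]
  calc ‖(n : ℂ)⁻¹‖ * ‖∑ k ∈ Finset.range n, (⇑α)^[k] a‖
      ≤ ‖(n : ℂ)⁻¹‖ * (n * ‖a‖) := by
        refine mul_le_mul_of_nonneg_left ?_ (norm_nonneg _)
        refine (norm_sum_le _ _).trans ?_
        rw [Finset.sum_congr rfl fun k _ => iter_norm α k a, Finset.sum_const,
          Finset.card_range, nsmul_eq_mul]
    _ ≤ ‖a‖ := by
        rcases Nat.eq_zero_or_pos n with rfl | hn
        · simp
        · rw [norm_inv, Complex.norm_natCast]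
          rw [← mul_assoc, inv_mul_cancel₀ (by exact_mod_cast hn.ne'), one_mul]

lemma erg_add (n : ℕ) (a b : A) : erg α n (a + b) = erg α n a + erg α n b := by
  unfold erg
  rw [Finset.sum_congr rfl fun k _ => iter_map_add α k a b, Finset.sum_add_distrib, smul_add]

lemma erg_smul (n : ℕ) (c : ℂ) (a : A) : erg α n (c • a) = c • erg α n a := by
  unfold erg
  rw [Finset.sum_congr rfl fun k _ => iter_map_smul α k c a, ← Finset.smul_sum, smul_comm]

lemma erg_shift (n : ℕ) (a : A) :
    erg α n (α a) - erg α n a = (n : ℂ)⁻¹ • ((⇑α)^[n] a - a) := by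
  unfold erg
  rw [← smul_sub, ← Finset.sum_sub_distrib]
  congr 1
  have : ∀ k, (⇑α)^[k] (α a) - (⇑α)^[k] a = (⇑α)^[k+1] a - (⇑α)^[k] a := by
    intro k; rw [← Function.iterate_succ_apply]
  rw [Finset.sum_congr rfl fun k _ => this k, Finset.sum_range_sub (fun k => (⇑α)^[k] a)]
  rfl

lemma erg_apply_linear (n : ℕ) (a : A) (ρ : A →L[ℂ] ℂ) :
    ρ (erg α n a) = (n : ℂ)⁻¹ • ∑ k ∈ Finset.range n, ρ ((⇑α)^[k] a) := by
  unfold erg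
  rw [map_smul, map_sum]

lemma erg_invariant (n : ℕ) (hn : 1 ≤ n) (a : A) (φ : A →L[ℂ] ℂ)
    (hφ : ∀ a : A, φ (α a) = φ a) : φ (erg α n a) = φ a := by
  have hiter : ∀ k, φ ((⇑α)^[k] a) = φ a := by
    intro k
    induction k with
    | zero => rfl
    | succ k ih => rw [Function.iterate_succ_apply', hφ, ih]
  rw [erg_apply_linear, Finset.sum_congr rfl fun k _ => hiter k, Finset.sum_const,
    Finset.card_range, smul_eq_mul, nsmul_eq_mul]
  rw [← mul_assoc, inv_mul_cancel₀ (by exact_mod_cast Nat.pos_of_ne_zero (by omega) |>.ne'), one_mul]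

lemma backward_direction
    (hconv : ∀ a : A, ∃ c : ℂ, Tendsto (fun n : ℕ => erg α n a) atTop (𝓝 (c • (1 : A)))) :
    ∃! φ : A →L[ℂ] ℂ,
      (φ 1 = 1 ∧ ∀ a : A, 0 ≤ φ (star a * a)) ∧ ∀ a : A, φ (α a) = φ a := by
  obtain ⟨ψ₀, hψ₀n, hψ₀1, -⟩ := exists_norming_functional (1 : A) (IsSelfAdjoint.one A)
  have hψ₀pos := pos_of_norm_le_one ψ₀ hψ₀n hψ₀1
  set φfun : A → ℂ := fun a => Classical.choose (hconv a) with hφfun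
  have hlim : ∀ a : A, Tendsto (fun n : ℕ => ψ₀ (erg α n a)) atTop (𝓝 (φfun a)) := by
    intro a
    have h1 := Classical.choose_spec (hconv a)
    have h2 := (ψ₀.continuous.tendsto _).comp h1
    have h3 : ψ₀ (Classical.choose (hconv a) • (1 : A)) = φfun a := by
      rw [map_smul, hψ₀1, smul_eq_mul, mul_one]
    rwa [h3] at h2
  -- each ψ value is bounded
  have hbdd : ∀ (a : A) (n : ℕ), ‖ψ₀ (erg α n a)‖ ≤ ‖a‖ := fun a n =>
    (ψ₀.le_of_opNorm_le hψ₀n _).trans (by rw [one_mul]; exact erg_norm_le α n a)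
  have hnormφ : ∀ a : A, ‖φfun a‖ ≤ 1 * ‖a‖ := by
    intro a
    rw [one_mul]
    exact le_of_tendsto ((hlim a).norm) (Eventually.of_forall (hbdd a))
  set φlin : A →ₗ[ℂ] ℂ :=
    { toFun := φfun
      map_add' := fun a b => by
        refine tendsto_nhds_unique (hlim (a + b)) ?_
        have : (fun n : ℕ => ψ₀ (erg α n a) + ψ₀ (erg α n b)) =
            fun n : ℕ => ψ₀ (erg α n (a + b)) := by
          funext n; rw [erg_add, map_add]
        rw [← this]
        exact (hlim a).add (hlim b)
      map_smul' := fun c a => by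
        simp only [RingHom.id_apply]
        refine tendsto_nhds_unique (hlim (c • a)) ?_
        have : (fun n : ℕ => c • ψ₀ (erg α n a)) = fun n : ℕ => ψ₀ (erg α n (c • a)) := by
          funext n; rw [erg_smul, map_smul]
        rw [← this]
        exact (hlim a).const_smul c } with hφlin
  set φ : A →L[ℂ] ℂ := LinearMap.mkContinuous φlin 1 hnormφ with hφ
  have hφ_apply : ∀ a : A, φ a = φfun a := fun a => rfl
  have hφ1 : φ 1 = 1 := by
    rw [hφ_apply]
    refine tendsto_nhds_unique (hlim 1) ?_
    refine Tendsto.congr' ?_ tendsto_const_nhds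
    filter_upwards [eventually_ge_atTop 1] with n hn
    rw [erg_one α hn, hψ₀1]
  have hφpos : ∀ a : A, 0 ≤ φ (star a * a) := by
    intro a
    rw [hφ_apply]
    have hmem : ∀ n : ℕ, ψ₀ (erg α n (star a * a)) ∈ {z : ℂ | 0 ≤ z} := by
      intro n
      rw [erg_apply_linear]
      show (0:ℂ) ≤ _
      refine smul_nonneg (inv_natCast_nonneg n) ?_
      refine Finset.sum_nonneg fun k _ => ?_
      rw [iter_map_star_mul_self]
      exact hψ₀pos _
    exact isClosed_nonneg_complex.mem_of_tendsto (hlim _) (Eventually.of_forall hmem)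
  have hφinv : ∀ a : A, φ (α a) = φ a := by
    intro a
    rw [hφ_apply, hφ_apply]
    refine tendsto_nhds_unique (hlim (α a)) ?_
    have h0 : Tendsto (fun n : ℕ => ψ₀ (erg α n (α a)) - ψ₀ (erg α n a)) atTop (𝓝 0) := by
      have hb : ∀ n : ℕ, ‖ψ₀ (erg α n (α a)) - ψ₀ (erg α n a)‖ ≤ (n : ℝ)⁻¹ * (2 * ‖a‖) := by
        intro n
        rw [← map_sub, erg_shift]
        refine (ψ₀.le_of_opNorm_le hψ₀n _).trans ?_
        rw [one_mul, norm_smul, norm_inv, Complex.norm_natCast]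
        refine mul_le_mul_of_nonneg_left ?_ (by positivity)
        refine (norm_sub_le _ _).trans ?_
        rw [iter_norm]
        linarith
      exact squeeze_zero_norm hb
        (by simpa using (tendsto_inv_atTop_nhds_zero_nat (𝕜 := ℝ)).mul_const (2 * ‖a‖))
    have hsum := (hlim a).add h0
    rw [add_zero] at hsum
    refine Tendsto.congr (fun n => ?_) hsum
    ring
  refine ⟨φ, ⟨⟨hφ1, hφpos⟩, hφinv⟩, ?_⟩
  intro ψ hψ
  ext a
  have h1 : Tendsto (fun n : ℕ => ψ (erg α n a)) atTop (𝓝 (φfun a)) := by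
    have h2 := (ψ.continuous.tendsto _).comp (Classical.choose_spec (hconv a))
    have h3 : ψ (Classical.choose (hconv a) • (1 : A)) = φfun a := by
      rw [map_smul, hψ.1.1, smul_eq_mul, mul_one]
    rwa [h3] at h2
  have h2 : Tendsto (fun n : ℕ => ψ (erg α n a)) atTop (𝓝 (ψ a)) := by
    refine Tendsto.congr' ?_ tendsto_const_nhds
    filter_upwards [eventually_ge_atTop 1] with n hn
    exact (erg_invariant α n hn a ψ hψ.2).symm
  rw [hφ_apply]
  exact tendsto_nhds_unique h2 h1
lemma forward_direction (φ : A →L[ℂ] ℂ)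
    (hφ : (φ 1 = 1 ∧ ∀ x : A, 0 ≤ φ (star x * x)) ∧ ∀ x : A, φ (α x) = φ x)
    (huniq : ∀ ψ : A →L[ℂ] ℂ,
      ((ψ 1 = 1 ∧ ∀ x : A, 0 ≤ ψ (star x * x)) ∧ ∀ x : A, ψ (α x) = ψ x) → ψ = φ)
    (a : A) : Tendsto (fun n : ℕ => erg α n a) atTop (𝓝 (φ a • (1 : A))) := by
  by_contra hcon
  rw [Metric.tendsto_atTop] at hcon
  push_neg at hcon
  obtain ⟨ε, hε, hfreq⟩ := hcon
  set b : ℕ → A := fun n => erg α n a - φ a • (1 : A) with hb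
  choose ρ hρn hρ1 hρhalf using fun n => exists_state_half (b n)
  have hρpos : ∀ n (x : A), 0 ≤ ρ n (star x * x) := fun n => pos_of_norm_le_one (ρ n) (hρn n) (hρ1 n)
  -- the averaging operators as continuous linear maps
  set T : ℕ → (A →L[ℂ] A) := fun n => LinearMap.mkContinuous
    { toFun := erg α n
      map_add' := erg_add α n
      map_smul' := fun c x => by simpa using erg_smul α n c x } 1
    (fun x => by rw [one_mul]; exact erg_norm_le α n x) with hT
  have hTnorm : ∀ n, ‖T n‖ ≤ 1 := fun n =>
    LinearMap.mkContinuous_norm_le _ zero_le_one _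
  have hTapp : ∀ n x, T n x = erg α n x := fun n x => rfl
  set σcl : ℕ → (A →L[ℂ] ℂ) := fun n => (ρ n).comp (T n) with hσcl
  have hσnorm : ∀ n, ‖σcl n‖ ≤ 1 := fun n => by
    refine (ContinuousLinearMap.opNorm_comp_le _ _).trans ?_
    calc ‖ρ n‖ * ‖T n‖ ≤ 1 * 1 :=
      mul_le_mul (hρn n) (hTnorm n) (norm_nonneg _) zero_le_one
    _ = 1 := one_mul 1
  set σ : ℕ → WeakDual ℂ A := fun n => StrongDual.toWeakDual (σcl n) with hσ
  have hσapp : ∀ n x, σ n x = ρ n (erg α n x) := fun n x => rfl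
  -- compactness
  set K : Set (WeakDual ℂ A) := WeakDual.toStrongDual ⁻¹' Metric.closedBall 0 1 with hK
  have hKc : IsCompact K := WeakDual.isCompact_closedBall (𝕜 := ℂ) (E := A) 0 1
  have hσK : ∀ n, σ n ∈ K := by
    intro n
    simp only [hK, Set.mem_preimage, Metric.mem_closedBall, dist_zero_right]
    exact hσnorm n
  -- the filter
  set S : Set ℕ := {n | ε ≤ dist (erg α n a) (φ a • (1 : A))} with hS
  set L : Filter ℕ := atTop ⊓ 𝓟 S with hL
  haveI hLne : L.NeBot := by
    rw [← Filter.frequently_iff_neBot]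
    rw [Filter.frequently_atTop]
    exact hfreq
  have hLatTop : L ≤ atTop := inf_le_left
  have hLS : ∀ᶠ n in L, n ∈ S :=
    le_principal_iff.mp inf_le_right
  -- cluster point
  have hmaple : Filter.map σ L ≤ 𝓟 K :=
    le_principal_iff.mpr (mem_map.mpr (Eventually.of_forall hσK))
  obtain ⟨ψw, hψwK, hclu⟩ := hKc.exists_clusterPt hmaple
  -- key extraction principles
  have keyEq : ∀ (f : WeakDual ℂ A → ℂ), Continuous f → ∀ c : ℂ,
      Tendsto (fun n => f (σ n)) L (𝓝 c) → f ψw = c := by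
    intro f hf c ht
    have h1 : ClusterPt (f ψw) (Filter.map f (Filter.map σ L)) :=
      hclu.map hf.continuousAt Filter.tendsto_map
    rw [Filter.map_map] at h1
    have h2 : ClusterPt (f ψw) (𝓝 c) := h1.mono ht
    exact eq_of_nhds_neBot h2
  have keyMem : ∀ (f : WeakDual ℂ A → ℂ), Continuous f → ∀ C : Set ℂ, IsClosed C →
      (∀ᶠ n in L, f (σ n) ∈ C) → f ψw ∈ C := by
    intro f hf C hC hev
    have h1 : ClusterPt (f ψw) (Filter.map f (Filter.map σ L)) :=
      hclu.map hf.continuousAt Filter.tendsto_map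
    rw [Filter.map_map] at h1
    have h2 : ClusterPt (f ψw) (𝓟 C) := h1.mono (by
      rw [Filter.le_principal_iff]
      exact mem_map.mpr hev)
    rw [← hC.closure_eq]
    exact mem_closure_iff_clusterPt.mpr h2
  set ψ : A →L[ℂ] ℂ := WeakDual.toStrongDual ψw with hψ
  have hψapp : ∀ x : A, ψ x = ψw x := fun x => rfl
  -- (1) unital
  have h1 : ψ 1 = 1 := by
    refine keyEq (fun f => f 1) (WeakDual.eval_continuous 1) 1 ?_
    refine Tendsto.congr' ?_ tendsto_const_nhds
    have : ∀ᶠ n in L, 1 ≤ n := hLatTop (eventually_ge_atTop 1)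
    filter_upwards [this] with n hn
    rw [hσapp, erg_one α hn, hρ1]
  -- (2) positive
  have h2 : ∀ x : A, 0 ≤ ψ (star x * x) := by
    intro x
    have := keyMem (fun f => f (star x * x)) (WeakDual.eval_continuous _)
      {z : ℂ | 0 ≤ z} isClosed_nonneg_complex ?_
    · exact this
    refine Eventually.of_forall fun n => ?_
    show (0 : ℂ) ≤ σ n (star x * x)
    rw [hσapp, erg_apply_linear]
    refine smul_nonneg (inv_natCast_nonneg n) ?_
    refine Finset.sum_nonneg fun k _ => ?_
    rw [iter_map_star_mul_self]
    exact hρpos n _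
  -- (3) invariant
  have h3 : ∀ x : A, ψ (α x) = ψ x := by
    intro x
    have hsub := keyEq (fun f => f (α x) - f x)
      ((WeakDual.eval_continuous (α x)).sub (WeakDual.eval_continuous x)) 0 ?_
    · exact sub_eq_zero.mp hsub
    · have hbnd : ∀ n : ℕ, ‖σ n (α x) - σ n x‖ ≤ (n : ℝ)⁻¹ * (2 * ‖x‖) := by
        intro n
        rw [hσapp, hσapp, ← map_sub, erg_shift]
        refine ((ρ n).le_of_opNorm_le (hρn n) _).trans ?_
        rw [one_mul, norm_smul, norm_inv, Complex.norm_natCast]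
        refine mul_le_mul_of_nonneg_left ?_ (by positivity)
        refine (norm_sub_le _ _).trans ?_
        rw [iter_norm]
        linarith
      refine squeeze_zero_norm hbnd ?_
      refine Tendsto.mono_left ?_ hLatTop
      simpa using (tendsto_inv_atTop_nhds_zero_nat (𝕜 := ℝ)).mul_const (2 * ‖x‖)
  -- (4) separation
  have h4 : ψ a ≠ φ a := by
    have hmem := keyMem (fun f => f a) (WeakDual.eval_continuous a)
      {z : ℂ | ε / 2 ≤ dist z (φ a)}
      (isClosed_le continuous_const (continuous_id.dist continuous_const)) ?_
    · intro hcontra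
      have : ε / 2 ≤ dist (ψ a) (φ a) := hmem
      rw [hcontra, dist_self] at this
      linarith
    · filter_upwards [hLS] with n hn
      show ε / 2 ≤ dist (σ n a) (φ a)
      have heq : σ n a - φ a = ρ n (b n) := by
        rw [hσapp, hb]
        simp only [map_sub, map_smul, hρ1, smul_eq_mul, mul_one]
      have hnb : ε ≤ ‖b n‖ := by
        rw [hb]
        have hn' : ε ≤ dist (erg α n a) (φ a • (1 : A)) := hn
        rwa [dist_eq_norm] at hn'
      have := (hnb.trans (hρhalf n))
      rw [dist_eq_norm, heq]
      linarith
  exact h4 (by rw [huniq ψ ⟨⟨h1, h2⟩, h3⟩])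
end

end UniqErg9

/-- A *-automorphism `α` of a unital C*-algebra is uniquely ergodic (has exactly
one invariant state) if and only if all ergodic averages converge in norm to scalar multiples
of the identity; moreover, in this case the averages of `a` converge to `φ(a) • 1` where `φ`
is the unique invariant state. -/
theorem uniquely_ergodic_iff_ergodic_averages_scalar {A : Type*} [NormedRing A] [StarRing A]
    [CStarRing A] [NormedAlgebra ℂ A] [CompleteSpace A] [StarModule ℂ A] [Nontrivial A]
    (α : A ≃⋆ₐ[ℂ] A) :
    ((∃! φ : A →L[ℂ] ℂ,
        (φ 1 = 1 ∧ ∀ a : A, 0 ≤ φ (star a * a)) ∧ ∀ a : A, φ (α a) = φ a) ↔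
      (∀ a : A, ∃ c : ℂ,
        Tendsto (fun n : ℕ => (n : ℂ)⁻¹ • ∑ k ∈ Finset.range n, (⇑α)^[k] a) atTop
          (𝓝 (c • (1 : A))))) ∧
    ((∃! φ : A →L[ℂ] ℂ,
        (φ 1 = 1 ∧ ∀ a : A, 0 ≤ φ (star a * a)) ∧ ∀ a : A, φ (α a) = φ a) →
      ∀ φ : A →L[ℂ] ℂ,
        ((φ 1 = 1 ∧ ∀ a : A, 0 ≤ φ (star a * a)) ∧ ∀ a : A, φ (α a) = φ a) →
        ∀ a : A,
          Tendsto (fun n : ℕ => (n : ℂ)⁻¹ • ∑ k ∈ Finset.range n, (⇑α)^[k] a) atTop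
            (𝓝 (φ a • (1 : A)))) := by
  letI : CStarAlgebra A := {}
  constructor
  · constructor
    · rintro ⟨φ, hφ, huniq⟩ a
      exact ⟨φ a, UniqErg9.forward_direction α φ hφ (fun ψ h => huniq ψ h) a⟩
    · intro hconv
      exact UniqErg9.backward_direction α hconv
  · rintro ⟨φ₀, hφ₀, hu⟩ φ hφ a
    have hφeq : φ = φ₀ := hu φ hφ
    exact UniqErg9.forward_direction α φ hφ (fun ψ h => (hu ψ h).trans hφeq.symm) a
end

section
/- Let A be a unital C*-algebra over ℂ and α a *-automorphism of A with fixed-point subalgebra A^α. Then the linear subspace A^α + {a − α(a) : a ∈ A} is dense in A (in the norm topology) if and only if A^α + closure({a − α(a) : a ∈ A}) = A, where the closure is taken in the norm topology. -/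
open Filter Topology

namespace DenseFixedAux

variable {A : Type*} [CStarAlgebra A] (α : A ≃⋆ₐ[ℂ] A)

/-- Cesàro average of the orbit of `x` under `α`. -/
noncomputable def avg (n : ℕ) (x : A) : A :=
  (n : ℂ)⁻¹ • ∑ k ∈ Finset.range n, (⇑α)^[k] x

lemma iter_fix {c : A} (hc : α c = c) (k : ℕ) : (⇑α)^[k] c = c := by
  induction k with
  | zero => rfl
  | succ k ih => rw [Function.iterate_succ_apply', ih, hc]

lemma iter_norm (k : ℕ) (x : A) : ‖(⇑α)^[k] x‖ = ‖x‖ := by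
  induction k with
  | zero => rfl
  | succ k ih => rw [Function.iterate_succ_apply', StarAlgEquiv.norm_map, ih]

lemma iter_sub (k : ℕ) (x y : A) : (⇑α)^[k] (x - y) = (⇑α)^[k] x - (⇑α)^[k] y := by
  induction k with
  | zero => rfl
  | succ k ih =>
      rw [Function.iterate_succ_apply', Function.iterate_succ_apply',
        Function.iterate_succ_apply', ih, map_sub]

lemma iter_add (k : ℕ) (x y : A) : (⇑α)^[k] (x + y) = (⇑α)^[k] x + (⇑α)^[k] y := by
  induction k with
  | zero => rfl
  | succ k ih =>
      rw [Function.iterate_succ_apply', Function.iterate_succ_apply',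
        Function.iterate_succ_apply', ih, map_add]

lemma avg_sub (n : ℕ) (x y : A) : avg α n (x - y) = avg α n x - avg α n y := by
  unfold avg
  rw [← smul_sub, ← Finset.sum_sub_distrib]
  simp_rw [iter_sub]

lemma avg_norm_le (n : ℕ) (x : A) : ‖avg α n x‖ ≤ ‖x‖ := by
  have h1 : ‖avg α n x‖ = (n : ℝ)⁻¹ * ‖∑ k ∈ Finset.range n, (⇑α)^[k] x‖ := by
    rw [avg, norm_smul, norm_inv, Complex.norm_natCast]
  have h2 : ‖∑ k ∈ Finset.range n, (⇑α)^[k] x‖ ≤ n * ‖x‖ := by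
    calc ‖∑ k ∈ Finset.range n, (⇑α)^[k] x‖ ≤ ∑ k ∈ Finset.range n, ‖(⇑α)^[k] x‖ :=
          norm_sum_le _ _
      _ = n * ‖x‖ := by simp [iter_norm]
  rcases Nat.eq_zero_or_pos n with hn | hn
  · simp [avg, hn, norm_nonneg]
  · have hn' : (0 : ℝ) < n := by exact_mod_cast hn
    rw [h1]
    calc (n : ℝ)⁻¹ * ‖∑ k ∈ Finset.range n, (⇑α)^[k] x‖ ≤ (n : ℝ)⁻¹ * (n * ‖x‖) := by
          gcongr
      _ = ‖x‖ := by field_simp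


end DenseFixedAux

namespace DenseFixedAux

variable {A : Type*} [CStarAlgebra A] (α : A ≃⋆ₐ[ℂ] A)

lemma smul_nat_cancel {n : ℕ} (hn : 0 < n) (c : A) : (n : ℂ)⁻¹ • (n • c) = c := by
  have h : (n : ℂ) ≠ 0 := Nat.cast_ne_zero.mpr hn.ne'
  rw [← Nat.cast_smul_eq_nsmul ℂ, smul_smul, inv_mul_cancel₀ h, one_smul]

lemma avg_apply_mem {n : ℕ} (hn : 0 < n) {c : A} (hc : α c = c) (a : A) :
    avg α n (c + (a - α a)) = c + (n : ℂ)⁻¹ • (a - (⇑α)^[n] a) := by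
  have key : ∀ k, (⇑α)^[k] (c + (a - α a)) = c + ((⇑α)^[k] a - (⇑α)^[k+1] a) := by
    intro k
    rw [iter_add, iter_sub, iter_fix α hc, ← Function.iterate_succ_apply]
  rw [avg]
  simp_rw [key]
  rw [Finset.sum_add_distrib, Finset.sum_const, Finset.card_range,
    Finset.sum_range_sub' (fun k => (⇑α)^[k] a), smul_add, smul_nat_cancel hn]
  simp

lemma alpha_avg (n : ℕ) (x : A) :
    α (avg α n x) - avg α n x = (n : ℂ)⁻¹ • ((⇑α)^[n] x - x) := by
  rw [avg, map_smul, map_sum]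
  simp_rw [← Function.iterate_succ_apply' α]
  rw [← smul_sub, ← Finset.sum_sub_distrib, Finset.sum_range_sub (fun k => (⇑α)^[k] x)]
  simp

lemma sub_avg_eq {n : ℕ} (hn : 0 < n) (x : A) :
    ∃ t : A, x - avg α n x = t - α t := by
  refine ⟨(n : ℂ)⁻¹ • ∑ k ∈ Finset.range n, ∑ j ∈ Finset.range k, (⇑α)^[j] x, ?_⟩
  rw [map_smul, map_sum]
  simp_rw [map_sum]
  rw [← smul_sub, ← Finset.sum_sub_distrib]
  have inner : ∀ k, ((∑ j ∈ Finset.range k, (⇑α)^[j] x) -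
      ∑ j ∈ Finset.range k, α ((⇑α)^[j] x)) = x - (⇑α)^[k] x := by
    intro k
    simp_rw [← Function.iterate_succ_apply' α]
    rw [← Finset.sum_sub_distrib, Finset.sum_range_sub' (fun j => (⇑α)^[j] x)]
    simp
  simp_rw [inner]
  rw [Finset.sum_sub_distrib, Finset.sum_const, Finset.card_range, smul_sub,
    smul_nat_cancel hn, avg]

end DenseFixedAux

open DenseFixedAux in
/-- The subspace `A^α + {a - α a : a ∈ A}` is dense in `A` if and only if
`A^α + closure {a - α a : a ∈ A} = A`. -/
theorem dense_iff_fixed_plus_closure {A : Type*} [NormedRing A] [StarRing A] [CStarRing A]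
    [NormedAlgebra ℂ A] [CompleteSpace A] [StarModule ℂ A] (α : A ≃⋆ₐ[ℂ] A) :
    Dense {x : A | ∃ c : A, α c = c ∧ ∃ a : A, x = c + (a - α a)} ↔
    ∀ x : A, ∃ c : A, α c = c ∧ x - c ∈ closure {y : A | ∃ a : A, y = a - α a} := by
  letI : CStarAlgebra A := ⟨⟩
  constructor
  · intro hd x
    -- Step 1: density gives that the Cesàro averages of `x` approach fixed points.
    have key : ∀ ε : ℝ, 0 < ε → ∃ c : A, α c = c ∧
        ∀ᶠ n in atTop, ‖avg α n x - c‖ < ε := by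
      intro ε hε
      obtain ⟨y, hyS, hxy⟩ := Metric.mem_closure_iff.mp (hd x) (ε / 2) (by linarith)
      obtain ⟨c, hc, a, rfl⟩ := hyS
      refine ⟨c, hc, ?_⟩
      have h2 : Tendsto (fun n : ℕ => 2 * ‖a‖ / n) atTop (𝓝 0) :=
        tendsto_const_div_atTop_nhds_zero_nat (2 * ‖a‖)
      have h3 : ∀ᶠ n : ℕ in atTop, 2 * ‖a‖ / n < ε / 2 :=
        (h2.eventually (eventually_lt_nhds (by linarith : (0:ℝ) < ε / 2)))
      filter_upwards [eventually_gt_atTop 0, h3] with n hn hn2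
      have havgy : avg α n (c + (a - α a)) = c + (n : ℂ)⁻¹ • (a - (⇑α)^[n] a) :=
        avg_apply_mem α hn hc a
      have hsplit : avg α n x - c =
          avg α n (x - (c + (a - α a))) + (n : ℂ)⁻¹ • (a - (⇑α)^[n] a) := by
        rw [avg_sub, havgy]; abel
      have hb1 : ‖avg α n (x - (c + (a - α a)))‖ ≤ ‖x - (c + (a - α a))‖ :=
        avg_norm_le α n _
      have hb2 : ‖(n : ℂ)⁻¹ • (a - (⇑α)^[n] a)‖ ≤ 2 * ‖a‖ / n := by
        rw [norm_smul, norm_inv, Complex.norm_natCast, div_eq_inv_mul]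
        have : ‖a - (⇑α)^[n] a‖ ≤ 2 * ‖a‖ := by
          calc ‖a - (⇑α)^[n] a‖ ≤ ‖a‖ + ‖(⇑α)^[n] a‖ := norm_sub_le _ _
            _ = 2 * ‖a‖ := by rw [iter_norm]; ring
        have hnn : (0:ℝ) ≤ (n : ℝ)⁻¹ := by positivity
        exact mul_le_mul_of_nonneg_left this hnn
      have hdist : ‖x - (c + (a - α a))‖ < ε / 2 := by
        rw [← dist_eq_norm]; exact hxy
      calc ‖avg α n x - c‖ ≤ ‖avg α n (x - (c + (a - α a)))‖ +
            ‖(n : ℂ)⁻¹ • (a - (⇑α)^[n] a)‖ := by rw [hsplit]; exact norm_add_le _ _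
        _ < ε / 2 + ε / 2 := by
            have := lt_of_le_of_lt hb1 hdist
            have := lt_of_le_of_lt hb2 hn2
            linarith
        _ = ε := by ring
    -- Step 2: the averages form a Cauchy sequence.
    have hcauchy : CauchySeq (fun n => avg α n x) := by
      rw [Metric.cauchySeq_iff]
      intro ε hε
      obtain ⟨c, -, hev⟩ := key (ε / 2) (by linarith)
      obtain ⟨N, hN⟩ := eventually_atTop.mp hev
      refine ⟨N, fun m hm n hn => ?_⟩
      have h1 := hN m hm
      have h2 := hN n hn
      calc dist (avg α m x) (avg α n x) = ‖(avg α m x - c) - (avg α n x - c)‖ := by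
            rw [dist_eq_norm]; congr 1; abel
        _ ≤ ‖avg α m x - c‖ + ‖avg α n x - c‖ := norm_sub_le _ _
        _ < ε / 2 + ε / 2 := add_lt_add h1 h2
        _ = ε := by ring
    obtain ⟨L, hL⟩ := cauchySeq_tendsto_of_complete hcauchy
    -- Step 3: the limit is a fixed point.
    have hcont : Continuous α := (StarAlgEquiv.isometry α).continuous
    have hfix : α L = L := by
      have h1 : Tendsto (fun n => α (avg α n x) - avg α n x) atTop (𝓝 (α L - L)) :=
        ((hcont.tendsto L).comp hL).sub hL
      have h2 : Tendsto (fun n => α (avg α n x) - avg α n x) atTop (𝓝 0) := by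
        apply squeeze_zero_norm (a := fun n : ℕ => 2 * ‖x‖ / n)
        · intro n
          rw [alpha_avg, norm_smul, norm_inv, Complex.norm_natCast, div_eq_inv_mul]
          have : ‖(⇑α)^[n] x - x‖ ≤ 2 * ‖x‖ := by
            calc ‖(⇑α)^[n] x - x‖ ≤ ‖(⇑α)^[n] x‖ + ‖x‖ := norm_sub_le _ _
              _ = 2 * ‖x‖ := by rw [iter_norm]; ring
          exact mul_le_mul_of_nonneg_left this (by positivity)
        · exact tendsto_const_div_atTop_nhds_zero_nat (2 * ‖x‖)
      have h0 := tendsto_nhds_unique h1 h2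
      have := sub_eq_zero.mp h0
      exact this
    refine ⟨L, hfix, ?_⟩
    -- Step 4: `x - L` is in the closure of the coboundaries.
    have htend : Tendsto (fun n => x - avg α n x) atTop (𝓝 (x - L)) :=
      tendsto_const_nhds.sub hL
    refine mem_closure_of_tendsto htend ?_
    filter_upwards [eventually_gt_atTop 0] with n hn
    obtain ⟨t, ht⟩ := sub_avg_eq α hn x
    exact ⟨t, ht⟩
  · -- Easy direction.
    intro h x
    obtain ⟨c, hc, hmem⟩ := h x
    obtain ⟨u, huB, hu⟩ := mem_closure_iff_seq_limit.mp hmem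
    have htend : Tendsto (fun n => c + u n) atTop (𝓝 (c + (x - c))) :=
      tendsto_const_nhds.add hu
    have hx : c + (x - c) = x := by abel
    rw [hx] at htend
    refine mem_closure_of_tendsto htend (Eventually.of_forall fun n => ?_)
    obtain ⟨a, ha⟩ := huB n
    exact ⟨c, hc, a, by rw [ha]⟩
end

section
/- Let A be a unital C*-algebra over ℂ and α a *-automorphism of A with fixed-point subalgebra A^α. Suppose that every bounded linear functional on A^α has a unique bounded linear extension φ to A satisfying φ ∘ α = φ, and let E be an α-invariant conditional expectation from A onto A^α. Then the kernel of E is contained in the norm closure of {a − α(a) : a ∈ A}. -/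
open Filter Topology

/-- If every bounded linear functional on `A^α` has a unique bounded
`α`-invariant linear extension to `A`, and `E` is an `α`-invariant conditional expectation
from `A` onto `A^α`, then `ker E ⊆ closure {a - α a : a ∈ A}`. -/
theorem ker_conditional_expectation_subset_closure {A : Type*} [NormedRing A] [StarRing A]
    [CStarRing A] [NormedAlgebra ℂ A] [CompleteSpace A] [StarModule ℂ A]
    (α : A ≃⋆ₐ[ℂ] A)
    (h : ∀ τ : fixedPointSubalgebra α →L[ℂ] ℂ,
      ∃! φ : A →L[ℂ] ℂ,
        (∀ b : fixedPointSubalgebra α, φ b = τ b) ∧ ∀ a : A, φ (α a) = φ a)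
    (E : A →L[ℂ] A)
    (hran : ∀ a : A, α (E a) = E a)
    (hfix : ∀ b : A, α b = b → E b = b)
    (hnorm : ‖E‖ = 1)
    (hinv : ∀ a : A, E (α a) = E a) :
    ∀ x : A, E x = 0 → x ∈ closure {y : A | ∃ a : A, y = a - α a} := by

  intro x hx
  by_contra hxc
  -- The set `{a - α a}` is a `ℂ`-submodule of `A`.
  set p : Submodule ℂ A :=
    { carrier := {y : A | ∃ a : A, y = a - α a}
      add_mem' := by
        rintro y z ⟨a, rfl⟩ ⟨b, rfl⟩
        exact ⟨a + b, by rw [map_add]; abel⟩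
      zero_mem' := ⟨0, by simp⟩
      smul_mem' := by
        rintro c y ⟨a, rfl⟩
        exact ⟨c • a, by rw [map_smul, smul_sub]⟩ } with hp
  set q : Submodule ℂ A := p.topologicalClosure with hq
  haveI : IsClosed (q : Set A) := Submodule.isClosed_topologicalClosure p
  have hxq : x ∉ q := by
    intro hmem
    exact hxc (by rw [← SetLike.mem_coe, Submodule.topologicalClosure_coe] at hmem; exact hmem)
  -- Pass to the quotient and use Hahn–Banach.
  have hne : (Submodule.Quotient.mk x : A ⧸ q) ≠ 0 := by
    simpa [Submodule.Quotient.mk_eq_zero] using hxq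
  obtain ⟨g, -, hg⟩ := exists_dual_vector ℂ (Submodule.Quotient.mk x : A ⧸ q) (norm_ne_zero_iff.mpr hne)
  -- The quotient map as a continuous linear map.
  let mkL : A →L[ℂ] A ⧸ q :=
    LinearMap.mkContinuous q.mkQ 1 (fun m => by
      simpa using Submodule.Quotient.norm_mk_le q m)
  let φ : A →L[ℂ] ℂ := g.comp mkL
  have hφx : φ x ≠ 0 := by
    have : φ x = ‖(Submodule.Quotient.mk x : A ⧸ q)‖ := hg
    rw [this]
    exact_mod_cast norm_ne_zero_iff.mpr hne
  have hφinv : ∀ a : A, φ (α a) = φ a := by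
    intro a
    have hmem : a - α a ∈ q := p.le_topologicalClosure ⟨a, rfl⟩
    have : φ (a - α a) = 0 := by
      simp only [φ, ContinuousLinearMap.comp_apply]
      have : mkL (a - α a) = 0 := (Submodule.Quotient.mk_eq_zero q).mpr hmem
      rw [this, map_zero]
    have := sub_eq_zero.mp (by simpa [map_sub] using this)
    exact this.symm
  -- Restrict `φ` to the fixed-point subalgebra.
  let τ : fixedPointSubalgebra α →L[ℂ] ℂ :=
    LinearMap.mkContinuous
      { toFun := fun b => φ (b : A)
        map_add' := fun a b => by simp
        map_smul' := fun c b => by simp }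
      ‖φ‖ (fun b => φ.le_opNorm b)
  obtain ⟨ψ, -, huniq⟩ := h τ
  have h1 : φ = ψ := huniq φ ⟨fun b => rfl, hφinv⟩
  have h2 : φ.comp E = ψ := by
    refine huniq (φ.comp E) ⟨fun b => ?_, fun a => ?_⟩
    · have : E (b : A) = (b : A) := hfix _ b.2
      simp only [ContinuousLinearMap.comp_apply, this]
      rfl
    · simp [hinv a]
  have : φ x = φ (E x) := by
    have := h1.trans h2.symm
    calc φ x = (φ.comp E) x := by rw [← this]
    _ = φ (E x) := rfl
  rw [hx, map_zero] at this
  exact hφx this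
end
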